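/- arXiv:1607.01515 — 13 statements merged into one kernel-verified Lean document; each statement's English description precedes it below -/
import Mathlib

section
/- Let X be a smooth finite-dimensional real normed space and let x, y ∈ X be nonzero. Then: (i) −1 ≤ cm(x,y) ≤ 1; (ii) |cm(x,y)| = 1 if and only if x and y are linearly dependent, or the segment joining x/‖x‖ and y/‖y‖ is contained in the unit sphere, or the segment joining x/‖x‖ and −y/‖y‖ is contained in the unit sphere; (iii) cm(x,y) = 0 if and only if x is Birkhoff orthogonal to y. -/
open scoped Topology

variable {X : Type*} [NormedAddCommGroup X] [NormedSpace ℝ X]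

/-- `f` is the norming functional of `x`: `‖f‖ = 1` and `f x = ‖x‖`. -/
def IsNormingFunctional (x : X) (f : X →L[ℝ] ℝ) : Prop :=
  ‖f‖ = 1 ∧ f x = ‖x‖

/-- A normed space is smooth if every nonzero vector has a unique norming functional. -/
def SmoothNormedSpace (X : Type*) [NormedAddCommGroup X] [NormedSpace ℝ X] : Prop :=
  ∀ x : X, x ≠ 0 → ∃! f : X →L[ℝ] ℝ, IsNormingFunctional x f

/-- Birkhoff orthogonality: `x ⊣_B y` iff `‖x + t • y‖ ≥ ‖x‖` for all real `t`. -/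
def BirkhoffOrth (x y : X) : Prop := ∀ t : ℝ, ‖x‖ ≤ ‖x + t • y‖

theorem aux_birkhoff_functional [FiniteDimensional ℝ X] {x y : X}
    (hli : LinearIndependent ℝ ![x, y]) (hB : BirkhoffOrth x y) (hx : x ≠ 0) :
    ∃ g : X →L[ℝ] ℝ, IsNormingFunctional x g ∧ g y = 0 := by
  set p : Submodule ℝ X := Submodule.span ℝ (Set.range ![x, y]) with hp
  let b : Module.Basis (Fin 2) ℝ p := Module.Basis.span hli
  let f₀ : ↥p →ₗ[ℝ] ℝ := ‖x‖ • (b.coord 0)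
  let f : ↥p →L[ℝ] ℝ := LinearMap.toContinuousLinearMap f₀
  have hxmem : x ∈ p := Submodule.subset_span ⟨0, rfl⟩
  have hymem : y ∈ p := Submodule.subset_span ⟨1, rfl⟩
  have e0 : ((b 0 : ↥p) : X) = x := congrArg Subtype.val (Module.Basis.span_apply hli 0)
  have e1 : ((b 1 : ↥p) : X) = y := congrArg Subtype.val (Module.Basis.span_apply hli 1)
  have key : ∀ (a c : ℝ) (h : a • x + c • y ∈ p), f₀ ⟨a • x + c • y, h⟩ = a * ‖x‖ := by
    intro a c h
    have h1 : (⟨a • x + c • y, h⟩ : p) = a • b 0 + c • b 1 := by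
      apply Subtype.ext
      push_cast
      rw [e0, e1]
    rw [h1]
    simp [f₀, Module.Basis.coord_apply, Module.Basis.repr_self, Finsupp.single_apply, mul_comm]
  have hxpos : (0:ℝ) < ‖x‖ := norm_pos_iff.mpr hx
  have hbound : ∀ v : ↥p, ‖f v‖ ≤ 1 * ‖v‖ := by
    intro v
    have hrange : Set.range ![x, y] = {x, y} := by
      ext z; simp [Fin.exists_fin_two, or_comm]
    have hv : (v : X) ∈ Submodule.span ℝ ({x, y} : Set X) := by
      rw [← hrange]; exact v.2
    obtain ⟨a, c, hac⟩ := Submodule.mem_span_pair.mp hv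
    have hveq : v = ⟨a • x + c • y, by rw [hac]; exact v.2⟩ := Subtype.ext hac.symm
    have hfv : f v = a * ‖x‖ := by
      rw [hveq]
      exact key a c _
    rw [hfv, one_mul]
    have hnv : ‖v‖ = ‖a • x + c • y‖ := by rw [hveq]; rfl
    rw [hnv, Real.norm_eq_abs, abs_mul, abs_norm]
    rcases eq_or_ne a 0 with ha | ha
    · simp [ha]
    · have h1 : ‖x‖ ≤ ‖x + (c / a) • y‖ := hB (c / a)
      have h2 : a • (x + (c / a) • y) = a • x + c • y := by
        rw [smul_add, smul_smul, mul_div_cancel₀ _ ha]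
      calc |a| * ‖x‖ ≤ |a| * ‖x + (c / a) • y‖ := by
            exact mul_le_mul_of_nonneg_left h1 (abs_nonneg a)
        _ = ‖a • (x + (c / a) • y)‖ := by rw [norm_smul, Real.norm_eq_abs]
        _ = ‖a • x + c • y‖ := by rw [h2]
  have hfle : ‖f‖ ≤ 1 := ContinuousLinearMap.opNorm_le_bound f zero_le_one hbound
  obtain ⟨g, hg, hgn⟩ := exists_extension_norm_eq p f
  have hfc : ∀ v : ↥p, f v = f₀ v := fun v => rfl
  have hgx : g x = ‖x‖ := by
    have := hg ⟨x, hxmem⟩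
    rw [this, hfc]
    have : (⟨x, hxmem⟩ : p) = ⟨(1:ℝ) • x + (0:ℝ) • y, by simpa using hxmem⟩ := by
      apply Subtype.ext; simp
    rw [this, key 1 0]; ring
  have hgy : g y = 0 := by
    have := hg ⟨y, hymem⟩
    rw [this, hfc]
    have : (⟨y, hymem⟩ : p) = ⟨(0:ℝ) • x + (1:ℝ) • y, by simpa using hymem⟩ := by
      apply Subtype.ext; simp
    rw [this, key 0 1]; ring
  have hg1 : ‖g‖ = 1 := by
    refine le_antisymm (hgn ▸ hfle) ?_
    have h1 : ‖x‖ ≤ ‖g‖ * ‖x‖ := by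
      calc ‖x‖ = ‖g x‖ := by rw [hgx, Real.norm_eq_abs, abs_norm]
        _ ≤ ‖g‖ * ‖x‖ := g.le_opNorm x
    nlinarith
  exact ⟨g, ⟨hg1, hgx⟩, hgy⟩

theorem aux_seg_norming [FiniteDimensional ℝ X] (hsm : SmoothNormedSpace X)
    (F : X → X →L[ℝ] ℝ) (hF : ∀ x : X, x ≠ 0 → IsNormingFunctional x (F x))
    {u w : X} (hu : ‖u‖ = 1) (hw : ‖w‖ = 1)
    (hseg : segment ℝ u w ⊆ {v : X | ‖v‖ = 1}) {f : X →L[ℝ] ℝ}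
    (hf : IsNormingFunctional u f) : f w = 1 := by
  set m : X := (2⁻¹ : ℝ) • u + (2⁻¹ : ℝ) • w with hm
  have hmseg : m ∈ segment ℝ u w := ⟨2⁻¹, 2⁻¹, by norm_num, by norm_num, by norm_num, rfl⟩
  have hmn : ‖m‖ = 1 := hseg hmseg
  have hm0 : m ≠ 0 := by intro h; rw [h, norm_zero] at hmn; norm_num at hmn
  obtain ⟨hg1, hgm⟩ := hF m hm0
  set g : X →L[ℝ] ℝ := F m
  have hgu : g u ≤ 1 := by
    calc g u ≤ |g u| := le_abs_self _
      _ ≤ ‖g‖ * ‖u‖ := g.le_opNorm u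
      _ = 1 := by rw [hg1, hu]; ring
  have hgw : g w ≤ 1 := by
    calc g w ≤ |g w| := le_abs_self _
      _ ≤ ‖g‖ * ‖w‖ := g.le_opNorm w
      _ = 1 := by rw [hg1, hw]; ring
  have hsum : g u + g w = 2 := by
    have : g m = 2⁻¹ * g u + 2⁻¹ * g w := by
      rw [hm]; simp
    rw [hgm, hmn] at this
    linarith
  have hgu1 : g u = 1 := by linarith
  have hgw1 : g w = 1 := by linarith
  have hu0 : u ≠ 0 := by intro h; rw [h, norm_zero] at hu; norm_num at hu
  have hung : IsNormingFunctional u g := ⟨hg1, by rw [hgu1, hu]⟩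
  have : f = g := (hsm u hu0).unique hf hung
  rw [this, hgw1]

theorem stmt_0 [FiniteDimensional ℝ X] (hsm : SmoothNormedSpace X)
    (F : X → X →L[ℝ] ℝ) (hF : ∀ x : X, x ≠ 0 → IsNormingFunctional x (F x))
    (x y : X) (hx : x ≠ 0) (hy : y ≠ 0) :
    (-1 ≤ F x y / ‖y‖ ∧ F x y / ‖y‖ ≤ 1) ∧
    (|F x y / ‖y‖| = 1 ↔
      (¬ LinearIndependent ℝ ![x, y]) ∨
      segment ℝ (‖x‖⁻¹ • x) (‖y‖⁻¹ • y) ⊆ {v : X | ‖v‖ = 1} ∨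
      segment ℝ (‖x‖⁻¹ • x) (-(‖y‖⁻¹ • y)) ⊆ {v : X | ‖v‖ = 1}) ∧
    (F x y / ‖y‖ = 0 ↔ BirkhoffOrth x y) := by
  obtain ⟨hFx1, hFxx⟩ := hF x hx
  have hnx : (0:ℝ) < ‖x‖ := norm_pos_iff.mpr hx
  have hny : (0:ℝ) < ‖y‖ := norm_pos_iff.mpr hy
  set u : X := ‖x‖⁻¹ • x with hud
  set w : X := ‖y‖⁻¹ • y with hwd
  have hu : ‖u‖ = 1 := by
    rw [hud, norm_smul, Real.norm_eq_abs, abs_inv, abs_norm, inv_mul_cancel₀ hnx.ne']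
  have hw : ‖w‖ = 1 := by
    rw [hwd, norm_smul, Real.norm_eq_abs, abs_inv, abs_norm, inv_mul_cancel₀ hny.ne']
  have hFxu : F x u = 1 := by
    rw [hud, map_smul, smul_eq_mul, hFxx, inv_mul_cancel₀ hnx.ne']
  clear_value u w
  have habs : |F x y| ≤ ‖y‖ := by
    calc |F x y| = ‖F x y‖ := (Real.norm_eq_abs _).symm
      _ ≤ ‖F x‖ * ‖y‖ := (F x).le_opNorm y
      _ = ‖y‖ := by rw [hFx1, one_mul]
  have hi : -1 ≤ F x y / ‖y‖ ∧ F x y / ‖y‖ ≤ 1 := by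
    rw [← abs_le, abs_div, abs_norm, div_le_one hny]
    exact habs
  refine ⟨hi, ?_, ?_⟩
  · constructor
    · intro h1
      rcases (abs_eq (by norm_num : (0:ℝ) ≤ 1)).mp h1 with hc | hc
      · -- F x y = ‖y‖ : middle disjunct
        have hFxy : F x y = ‖y‖ := by
          field_simp at hc; linarith
        have hFxw : F x w = 1 := by
          rw [hwd, map_smul, smul_eq_mul, hFxy, inv_mul_cancel₀ hny.ne']
        refine Or.inr (Or.inl ?_)
        rintro v ⟨s, t, hs, ht, hst, rfl⟩
        have h2 : F x (s • u + t • w) = 1 := by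
          rw [map_add, map_smul, map_smul, smul_eq_mul, smul_eq_mul, hFxu, hFxw]
          linarith
        have h3 : ‖s • u + t • w‖ ≤ 1 := by
          calc ‖s • u + t • w‖ ≤ ‖s • u‖ + ‖t • w‖ := norm_add_le _ _
            _ = s + t := by
              rw [norm_smul, norm_smul, hu, hw, Real.norm_eq_abs, Real.norm_eq_abs,
                abs_of_nonneg hs, abs_of_nonneg ht]; ring
            _ = 1 := hst
        have h4 : (1:ℝ) ≤ ‖s • u + t • w‖ := by
          calc (1:ℝ) = F x (s • u + t • w) := h2.symm
            _ ≤ |F x (s • u + t • w)| := le_abs_self _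
            _ ≤ ‖F x‖ * ‖s • u + t • w‖ := (F x).le_opNorm _
            _ = ‖s • u + t • w‖ := by rw [hFx1, one_mul]
        exact le_antisymm h3 h4
      · -- F x y = -‖y‖ : right disjunct
        have hFxy : F x y = -‖y‖ := by
          field_simp at hc; linarith
        have hFxw : F x (-w) = 1 := by
          rw [map_neg, hwd, map_smul, smul_eq_mul, hFxy]
          field_simp
        refine Or.inr (Or.inr ?_)
        rintro v ⟨s, t, hs, ht, hst, rfl⟩
        have h2 : F x (s • u + t • (-w)) = 1 := by
          rw [map_add, map_smul, map_smul, smul_eq_mul, smul_eq_mul, hFxu, hFxw]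
          linarith
        have h3 : ‖s • u + t • (-w)‖ ≤ 1 := by
          calc ‖s • u + t • (-w)‖ ≤ ‖s • u‖ + ‖t • (-w)‖ := norm_add_le _ _
            _ = s + t := by
              rw [norm_smul, norm_smul, hu, norm_neg, hw, Real.norm_eq_abs, Real.norm_eq_abs,
                abs_of_nonneg hs, abs_of_nonneg ht]; ring
            _ = 1 := hst
        have h4 : (1:ℝ) ≤ ‖s • u + t • (-w)‖ := by
          calc (1:ℝ) = F x (s • u + t • (-w)) := h2.symm
            _ ≤ |F x (s • u + t • (-w))| := le_abs_self _
            _ ≤ ‖F x‖ * ‖s • u + t • (-w)‖ := (F x).le_opNorm _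
            _ = ‖s • u + t • (-w)‖ := by rw [hFx1, one_mul]
        exact le_antisymm h3 h4
    · rintro (hdep | hseg | hseg)
      · -- dependent case
        rw [linearIndependent_fin2] at hdep
        push_neg at hdep
        obtain ⟨a, ha⟩ := hdep (by simpa using hy)
        simp only [Matrix.cons_val_one, Matrix.head_cons, Matrix.cons_val_zero] at ha
        have ha0 : a ≠ 0 := by
          intro h; rw [h, zero_smul] at ha; exact hx ha.symm
        have h1 : a * F x y = ‖x‖ := by
          rw [← smul_eq_mul, ← map_smul, ha, hFxx]
        have h2 : ‖x‖ = |a| * ‖y‖ := by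
          rw [← ha, norm_smul, Real.norm_eq_abs]
        have h3 : |a| * |F x y| = |a| * ‖y‖ := by
          rw [← abs_mul, h1, ← h2, abs_norm]
        have h4 : |F x y| = ‖y‖ := by
          have := mul_left_cancel₀ (abs_ne_zero.mpr ha0) h3
          exact this
        rw [abs_div, abs_norm, h4, div_self hny.ne']
      · -- segment u w
        have hFxw : F x w = 1 :=
          aux_seg_norming hsm F hF hu hw hseg ⟨hFx1, by rw [hFxu, hu]⟩
        have : F x y = ‖y‖ := by
          have : F x (‖y‖ • w) = ‖y‖ * 1 := by rw [map_smul, smul_eq_mul, hFxw]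
          rw [hwd, smul_smul, mul_inv_cancel₀ hny.ne', one_smul] at this
          linarith
        rw [this, abs_div, abs_norm, div_self hny.ne']
      · -- segment u (-w)
        have hnw : ‖-w‖ = 1 := by rw [norm_neg, hw]
        have hFxw : F x (-w) = 1 :=
          aux_seg_norming hsm F hF hu hnw hseg ⟨hFx1, by rw [hFxu, hu]⟩
        have : F x y = -‖y‖ := by
          have h5 : F x (‖y‖ • (-w)) = ‖y‖ * 1 := by rw [map_smul, smul_eq_mul, hFxw]
          rw [hwd, smul_neg, smul_smul, mul_inv_cancel₀ hny.ne', one_smul, map_neg] at h5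
          linarith
        rw [this, abs_div, abs_neg, abs_norm, div_self hny.ne']
  · constructor
    · intro h0
      have hFxy : F x y = 0 := by
        rcases div_eq_zero_iff.mp h0 with h | h
        · exact h
        · exact absurd h hny.ne'
      intro t
      calc ‖x‖ = F x (x + t • y) := by
            rw [map_add, map_smul, smul_eq_mul, hFxy, hFxx]; ring
        _ ≤ |F x (x + t • y)| := le_abs_self _
        _ ≤ ‖F x‖ * ‖x + t • y‖ := (F x).le_opNorm _
        _ = ‖x + t • y‖ := by rw [hFx1, one_mul]
    · intro hB
      have hli : LinearIndependent ℝ ![x, y] := by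
        by_contra hdep
        rw [linearIndependent_fin2] at hdep
        push_neg at hdep
        obtain ⟨a, ha⟩ := hdep (by simpa using hy)
        simp only [Matrix.cons_val_one, Matrix.head_cons, Matrix.cons_val_zero] at ha
        have h0 : x + (-a) • y = 0 := by rw [neg_smul, ha, add_neg_cancel]
        have := hB (-a)
        rw [h0, norm_zero] at this
        exact absurd (le_antisymm this (norm_nonneg x)) hnx.ne'
      obtain ⟨g, hgn, hgy⟩ := aux_birkhoff_functional hli hB hx
      have : F x = g := (hsm x hx).unique (hF x hx) hgn
      rw [this, hgy, zero_div]
end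

section
/- Let X be a smooth finite-dimensional real normed space with dim X ≥ 2. If the cosine function is symmetric, i.e. f_x(y)/‖y‖ = f_y(x)/‖x‖ for all nonzero x, y ∈ X, then the norm of X is Euclidean: there exists an inner product ⟨·,·⟩ on X with ⟨v,v⟩ = ‖v‖² for all v ∈ X. -/
variable {X : Type*} [NormedAddCommGroup X] [NormedSpace ℝ X]

theorem stmt_1 [FiniteDimensional ℝ X] (hdim : 2 ≤ Module.finrank ℝ X)
    (hsm : SmoothNormedSpace X)
    (F : X → X →L[ℝ] ℝ) (hF : ∀ x : X, x ≠ 0 → IsNormingFunctional x (F x))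
    (hsymm : ∀ x y : X, x ≠ 0 → y ≠ 0 → F x y / ‖y‖ = F y x / ‖x‖) :
    ∃ B : X →ₗ[ℝ] X →ₗ[ℝ] ℝ, (∀ u v : X, B u v = B v u) ∧ ∀ v : X, B v v = ‖v‖ ^ 2 := by
  set g : X → X → ℝ := fun u v => ‖u‖ * F u v with hg
  have hsym : ∀ u v : X, g u v = g v u := by
    intro u v
    by_cases hu : u = 0
    · simp [hg, hu]
    by_cases hv : v = 0
    · simp [hg, hv]
    have h := hsymm u v hu hv
    have hnu : ‖u‖ ≠ 0 := norm_ne_zero_iff.mpr hu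
    have hnv : ‖v‖ ≠ 0 := norm_ne_zero_iff.mpr hv
    rw [div_eq_div_iff hnv hnu] at h
    simp only [hg]
    linarith
  have hadd2 : ∀ u v w : X, g u (v + w) = g u v + g u w := by
    intro u v w; simp [hg, mul_add]
  have hsmul2 : ∀ (c : ℝ) (u v : X), g u (c • v) = c * g u v := by
    intro c u v; simp [hg]; ring
  refine ⟨LinearMap.mk₂ ℝ g ?_ ?_ hadd2 hsmul2, ?_, ?_⟩
  · intro m₁ m₂ n
    rw [hsym, hadd2, hsym n m₁, hsym n m₂]
  · intro c m n
    rw [hsym, hsmul2, hsym n m]; rfl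
  · intro u v
    exact hsym u v
  · intro v
    by_cases hv : v = 0
    · simp [hg, hv]
    · simp only [LinearMap.mk₂_apply, hg, (hF v hv).2]
      ring
end

section
/- Let X be a smooth Minkowski plane with a fixed nondegenerate alternating bilinear form [·,·]. Let x, y ∈ X be nonzero and let w ∈ X satisfy ‖w‖_a = 1, x ⊣_B w, and [x,w] > 0 (that is, w = b(x)). Then the limit as t → 0 of (‖x + t·y‖ − ‖x‖)/t exists and equals [y,w]. -/
open scoped Topology

variable {X : Type*} [NormedAddCommGroup X] [NormedSpace ℝ X]

/-- A nondegenerate alternating bilinear form. -/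
def IsSymplecticForm (ω : X →ₗ[ℝ] X →ₗ[ℝ] ℝ) : Prop :=
  (∀ v : X, ω v v = 0) ∧ ∀ v : X, (∀ u : X, ω v u = 0) → v = 0

/-- The antinorm associated to the form `ω`: `‖v‖_a = sup {|ω v u| : ‖u‖ = 1}`. -/
noncomputable def antinorm (ω : X →ₗ[ℝ] X →ₗ[ℝ] ℝ) (v : X) : ℝ :=
  sSup {r : ℝ | ∃ u : X, ‖u‖ = 1 ∧ r = |ω v u|}

open Filter in
lemma partB [FiniteDimensional ℝ X] (hsm : SmoothNormedSpace X) (x y : X) (hx : x ≠ 0)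
    (h : X →L[ℝ] ℝ) (hh : IsNormingFunctional x h) :
    Filter.Tendsto (fun t : ℝ => (‖x + t • y‖ - ‖x‖) / t) (𝓝[≠] (0 : ℝ)) (𝓝 (h y)) := by
  classical
  have hxpos : (0:ℝ) < ‖x‖ := norm_pos_iff.2 hx
  -- eventually x + t y ≠ 0
  have hcont : Filter.Tendsto (fun t : ℝ => x + t • y) (𝓝 0) (𝓝 x) := by
    have : Filter.Tendsto (fun t : ℝ => x + t • y) (𝓝 0) (𝓝 (x + (0:ℝ) • y)) :=
      tendsto_const_nhds.add ((continuous_id.smul continuous_const).tendsto 0)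
    simpa using this
  have hne : ∀ᶠ t in 𝓝 (0:ℝ), x + t • y ≠ 0 := hcont.eventually_ne hx
  -- choice of norming functionals
  set F : ℝ → (X →L[ℝ] ℝ) := fun t =>
    if hc : x + t • y ≠ 0 then (hsm _ hc).exists.choose else h with hFdef
  have hF : ∀ t : ℝ, x + t • y ≠ 0 → IsNormingFunctional (x + t • y) (F t) := by
    intro t ht
    simp only [hFdef, dif_pos ht]
    exact (hsm _ ht).exists.choose_spec
  -- Claim 1 : F tends to h
  have hFh : Filter.Tendsto F (𝓝[≠] (0:ℝ)) (𝓝 h) := by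
    apply tendsto_of_subseq_tendsto
    intro ns hns
    have hns0 : Filter.Tendsto ns atTop (𝓝 0) := hns.mono_right nhdsWithin_le_nhds
    set u : ℕ → (X →L[ℝ] ℝ) := fun n => if x + ns n • y ≠ 0 then F (ns n) else h with hu
    have hub : ∀ n, u n ∈ Metric.closedBall (0 : X →L[ℝ] ℝ) 1 := by
      intro n
      rw [Metric.mem_closedBall, dist_zero_right]
      by_cases hc : x + ns n • y ≠ 0
      · simp only [hu, if_pos hc]; exact le_of_eq (hF _ hc).1
      · simp only [hu, if_neg hc]; exact le_of_eq hh.1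
    obtain ⟨g, hgball, ms, hms, hmt⟩ :=
      (isCompact_closedBall (0 : X →L[ℝ] ℝ) 1).tendsto_subseq hub
    refine ⟨ms, ?_⟩
    have hts : Filter.Tendsto (fun n => ns (ms n)) atTop (𝓝 0) :=
      hns0.comp hms.tendsto_atTop
    have hev : ∀ᶠ n in atTop, x + ns (ms n) • y ≠ 0 := hts.eventually hne
    -- g is a norming functional of x
    have hgx : g x = ‖x‖ := by
      have hvx : Filter.Tendsto (fun n => x + ns (ms n) • y) atTop (𝓝 x) := hcont.comp hts
      have h1 : Filter.Tendsto (fun n => (u (ms n)) (x + ns (ms n) • y)) atTop (𝓝 (g x)) :=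
        (isBoundedBilinearMap_apply.continuous.tendsto (g, x)).comp (hmt.prodMk_nhds hvx)
      have h2 : Filter.Tendsto (fun n => (u (ms n)) (x + ns (ms n) • y)) atTop (𝓝 ‖x‖) := by
        apply Filter.Tendsto.congr' ?_ ((continuous_norm.tendsto x).comp hvx)
        filter_upwards [hev] with n hn
        simp only [hu, if_pos hn, Function.comp]
        exact ((hF _ hn).2).symm
      exact tendsto_nhds_unique h1 h2
    have hgnorm : ‖g‖ = 1 := by
      refine le_antisymm (by simpa [dist_zero_right] using hgball) ?_
      have h1 := g.le_opNorm x
      rw [hgx, Real.norm_eq_abs, abs_of_nonneg (norm_nonneg x)] at h1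
      nlinarith
    have hgh : g = h := (hsm x hx).unique ⟨hgnorm, hgx⟩ hh
    refine Filter.Tendsto.congr' ?_ (hgh ▸ hmt)
    filter_upwards [hev] with n hn
    simp only [hu, Function.comp, if_pos hn]
  -- Claim 2 : squeeze
  have hne' : ∀ᶠ t in 𝓝[≠] (0:ℝ), x + t • y ≠ 0 := nhdsWithin_le_nhds hne
  have hnz : ∀ᶠ t in 𝓝[≠] (0:ℝ), t ≠ 0 := eventually_mem_nhdsWithin
  have key : ∀ᶠ t in 𝓝[≠] (0:ℝ),
      ‖(‖x + t • y‖ - ‖x‖) / t - h y‖ ≤ ‖F t - h‖ * ‖y‖ := by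
    filter_upwards [hne', hnz] with t hxt ht
    have hft := hF t hxt
    -- lower bound : ‖x‖ + t * h y ≤ ‖x + t y‖
    have hl : ‖x‖ + t * h y ≤ ‖x + t • y‖ := by
      have := h.le_opNorm (x + t • y)
      rw [hh.1, one_mul] at this
      have h2 : h (x + t • y) = ‖x‖ + t * h y := by
        rw [map_add, hh.2, map_smul]; rfl
      calc ‖x‖ + t * h y = h (x + t • y) := h2.symm
        _ ≤ |h (x + t • y)| := le_abs_self _
        _ ≤ ‖x + t • y‖ := this
    -- upper bound : ‖x + t y‖ ≤ ‖x‖ + t * F t y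
    have hr : ‖x + t • y‖ ≤ ‖x‖ + t * (F t) y := by
      have := (F t).le_opNorm x
      rw [hft.1, one_mul] at this
      have h2 : (F t) x = ‖x + t • y‖ - t * (F t) y := by
        have : (F t) (x + t • y) = ‖x + t • y‖ := hft.2
        rw [map_add, map_smul] at this
        simp only [smul_eq_mul] at this
        linarith
      have h3 : ‖x + t • y‖ - t * (F t) y ≤ ‖x‖ := by
        calc ‖x + t • y‖ - t * (F t) y = (F t) x := h2.symm
          _ ≤ |(F t) x| := le_abs_self _
          _ ≤ ‖x‖ := this
      linarith
    have hFhy : |(F t) y - h y| ≤ ‖F t - h‖ * ‖y‖ := by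
      have := (F t - h).le_opNorm y
      simpa using this
    rw [Real.norm_eq_abs]
    rcases lt_or_gt_of_ne ht with htneg | htpos
    · -- t < 0 : F t y ≤ q t ≤ h y
      have q1 : (‖x + t • y‖ - ‖x‖) / t ≤ h y := by
        rw [div_le_iff_of_neg htneg]; linarith
      have q2 : (F t) y ≤ (‖x + t • y‖ - ‖x‖) / t := by
        rw [le_div_iff_of_neg htneg]; linarith
      rw [abs_sub_comm, abs_of_nonneg (by linarith)]
      calc h y - (‖x + t • y‖ - ‖x‖) / t ≤ h y - (F t) y := by linarith
        _ ≤ |(F t) y - h y| := by rw [abs_sub_comm]; exact le_abs_self _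
        _ ≤ ‖F t - h‖ * ‖y‖ := hFhy
    · -- t > 0 : h y ≤ q t ≤ F t y
      have q1 : h y ≤ (‖x + t • y‖ - ‖x‖) / t := by
        rw [le_div_iff₀ htpos]; linarith
      have q2 : (‖x + t • y‖ - ‖x‖) / t ≤ (F t) y := by
        rw [div_le_iff₀ htpos]; linarith
      rw [abs_of_nonneg (by linarith)]
      calc (‖x + t • y‖ - ‖x‖) / t - h y ≤ (F t) y - h y := by linarith
        _ ≤ |(F t) y - h y| := le_abs_self _
        _ ≤ ‖F t - h‖ * ‖y‖ := hFhy
  have hz : Filter.Tendsto (fun t => ‖F t - h‖ * ‖y‖) (𝓝[≠] (0:ℝ)) (𝓝 0) := by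
    have h1 : Filter.Tendsto (fun t => F t - h) (𝓝[≠] (0:ℝ)) (𝓝 0) := by
      simpa using hFh.sub (tendsto_const_nhds : Filter.Tendsto (fun _ : ℝ => h) _ (𝓝 h))
    simpa using (h1.norm.mul_const ‖y‖)
  rw [← tendsto_sub_nhds_zero_iff]
  exact squeeze_zero_norm' key hz

open Filter in
lemma partA [FiniteDimensional ℝ X] (hdim : Module.finrank ℝ X = 2)
    (ω : X →ₗ[ℝ] X →ₗ[ℝ] ℝ) (hω : IsSymplecticForm ω)
    (x : X) (hx : x ≠ 0)
    (w : X) (hw_a : antinorm ω w = 1) (hw_orth : BirkhoffOrth x w) (hw_pos : 0 < ω x w) :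
    ∃ h : X →L[ℝ] ℝ, IsNormingFunctional x h ∧ ∀ v : X, h v = ω v w := by
  classical
  have hxpos : (0:ℝ) < ‖x‖ := norm_pos_iff.2 hx
  have halt : ∀ u v : X, ω u v = - ω v u := by
    intro u v
    have h1 := hω.1 (u + v)
    simp only [map_add, LinearMap.add_apply, hω.1 u, hω.1 v] at h1
    linarith
  -- x, w linearly independent, hence a basis
  have hxw : LinearIndependent ℝ ![x, w] := by
    rw [LinearIndependent.pair_iff]
    intro s t hst
    have h1 : s * ω x w = 0 := by
      have := congrArg (fun v => ω v w) hst
      simpa [map_add, map_smul, hω.1 w] using this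
    have h2 : t * ω x w = 0 := by
      have := congrArg (fun v => ω x v) hst
      simpa [map_add, map_smul, hω.1 x] using this
    exact ⟨(mul_eq_zero.1 h1).resolve_right hw_pos.ne',
           (mul_eq_zero.1 h2).resolve_right hw_pos.ne'⟩
  set B : Module.Basis (Fin 2) ℝ X := basisOfLinearIndependentOfCardEqFinrank hxw (by simp [hdim])
    with hBdef
  have hB : ⇑B = ![x, w] := coe_basisOfLinearIndependentOfCardEqFinrank hxw _
  have hB0 : B 0 = x := by rw [hB]; rfl
  have hB1 : B 1 = w := by rw [hB]; rfl
  have hrepr : ∀ v : X, v = B.repr v 0 • x + B.repr v 1 • w := by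
    intro v
    conv_lhs => rw [← B.sum_repr v]
    rw [Fin.sum_univ_two, hB0, hB1]
  -- the candidate functional h : coordinate functional scaled by ‖x‖
  have hbound : ∀ v : X, ‖(‖x‖ • B.coord 0) v‖ ≤ 1 * ‖v‖ := by
    intro v
    set a := B.repr v 0 with ha
    set b := B.repr v 1 with hb
    have hval : (‖x‖ • B.coord 0) v = ‖x‖ * a := by
      simp [Module.Basis.coord_apply, ← ha]
    rw [hval, one_mul, Real.norm_eq_abs, abs_mul, abs_of_nonneg (norm_nonneg x)]
    by_cases haz : a = 0
    · simp [haz]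
    · have hveq : v = a • (x + (b / a) • w) := by
        rw [smul_add, smul_smul, mul_div_cancel₀ _ haz]
        exact hrepr v
      calc ‖x‖ * |a| ≤ ‖x + (b / a) • w‖ * |a| := by
            have := hw_orth (b / a)
            nlinarith [abs_nonneg a]
        _ = ‖v‖ := by rw [hveq, norm_smul, Real.norm_eq_abs]; ring
  set h : X →L[ℝ] ℝ := LinearMap.mkContinuous (‖x‖ • B.coord 0) 1 hbound with hhdef
  have hhx : h x = ‖x‖ := by
    have : B.repr x 0 = 1 := by rw [← hB0, B.repr_self]; simp
    simp [hhdef, LinearMap.mkContinuous_apply, Module.Basis.coord_apply, this]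
  have hhw : h w = 0 := by
    have : B.repr w 0 = 0 := by rw [← hB1, B.repr_self]; simp
    simp [hhdef, LinearMap.mkContinuous_apply, Module.Basis.coord_apply, this]
  have hhnorm : ‖h‖ = 1 := by
    refine le_antisymm (LinearMap.mkContinuous_norm_le _ zero_le_one _) ?_
    have h1 := h.le_opNorm x
    rw [hhx, Real.norm_eq_abs, abs_of_nonneg (norm_nonneg x)] at h1
    nlinarith
  -- the functional g = ω · w
  set g : X →L[ℝ] ℝ := LinearMap.toContinuousLinearMap (ω.flip w) with hgdef
  have hgv : ∀ v : X, g v = ω v w := fun v => rfl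
  -- ‖g‖ = antinorm ω w = 1
  have hS_bdd : ∀ r ∈ {r : ℝ | ∃ u : X, ‖u‖ = 1 ∧ r = |ω w u|}, r ≤ ‖g‖ := by
    rintro r ⟨u, hu1, rfl⟩
    have : |ω w u| = |g u| := by rw [hgv, halt u w, abs_neg]
    rw [this]
    have := g.le_opNorm u
    rw [hu1, mul_one, Real.norm_eq_abs] at this
    exact this
  have hgnorm : ‖g‖ = 1 := by
    rw [← hw_a]
    unfold antinorm
    refine le_antisymm ?_ (csSup_le ⟨|ω w (‖x‖⁻¹ • x)|, ‖x‖⁻¹ • x, by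
        rw [norm_smul, Real.norm_eq_abs, abs_of_nonneg (inv_nonneg.2 (norm_nonneg x)),
          inv_mul_cancel₀ hxpos.ne'], rfl⟩ hS_bdd)
    have hbddAbove : BddAbove {r : ℝ | ∃ u : X, ‖u‖ = 1 ∧ r = |ω w u|} := ⟨‖g‖, hS_bdd⟩
    refine g.opNorm_le_bound ?_ ?_
    · refine le_csSup_of_le hbddAbove ⟨‖x‖⁻¹ • x, by
        rw [norm_smul, Real.norm_eq_abs, abs_of_nonneg (inv_nonneg.2 (norm_nonneg x)),
          inv_mul_cancel₀ hxpos.ne'], rfl⟩ (abs_nonneg _)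
    · intro v
      by_cases hv : v = 0
      · simp [hv]
      · have hvpos : (0:ℝ) < ‖v‖ := norm_pos_iff.2 hv
        have hmem : |ω w (‖v‖⁻¹ • v)| ∈ {r : ℝ | ∃ u : X, ‖u‖ = 1 ∧ r = |ω w u|} :=
          ⟨‖v‖⁻¹ • v, by rw [norm_smul, Real.norm_eq_abs,
            abs_of_nonneg (inv_nonneg.2 (norm_nonneg v)), inv_mul_cancel₀ hvpos.ne'], rfl⟩
        have hle := le_csSup hbddAbove hmem
        have heq : |ω w (‖v‖⁻¹ • v)| = ‖v‖⁻¹ * ‖g v‖ := by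
          rw [halt w, abs_neg, map_smul, LinearMap.smul_apply, smul_eq_mul, abs_mul,
            abs_of_nonneg (inv_nonneg.2 (norm_nonneg v)), Real.norm_eq_abs, hgv]
        rw [heq] at hle
        calc ‖g v‖ = (‖v‖⁻¹ * ‖g v‖) * ‖v‖ := by field_simp
          _ ≤ sSup {r : ℝ | ∃ u : X, ‖u‖ = 1 ∧ r = |ω w u|} * ‖v‖ := by
              exact mul_le_mul_of_nonneg_right hle (norm_nonneg v)
  -- g = (ω x w / ‖x‖) • h, hence ω x w = ‖x‖ and g = h
  have hgh : g = (ω x w / ‖x‖) • h := by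
    ext v
    rw [hgv]
    conv_lhs => rw [hrepr v]
    have hhv : h v = ‖x‖ * B.repr v 0 := by
      simp [hhdef, LinearMap.mkContinuous_apply, Module.Basis.coord_apply]
    simp only [map_add, map_smul, LinearMap.add_apply, LinearMap.smul_apply, smul_eq_mul,
      hω.1 w, ContinuousLinearMap.smul_apply, hhv]
    field_simp
    ring
  have hc1 : ω x w / ‖x‖ = 1 := by
    have : ‖g‖ = |ω x w / ‖x‖| * ‖h‖ := by
      rw [hgh]
      rw [norm_smul (ω x w / ‖x‖) h, Real.norm_eq_abs]
    rw [hgnorm, hhnorm, mul_one] at this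
    have hcpos : 0 < ω x w / ‖x‖ := div_pos hw_pos hxpos
    rw [abs_of_pos hcpos] at this
    linarith
  have hgeqh : g = h := by rw [hgh, hc1, one_smul]
  exact ⟨h, ⟨hhnorm, hhx⟩, fun v => by rw [← hgeqh, hgv]⟩

theorem stmt_3 [FiniteDimensional ℝ X] (hdim : Module.finrank ℝ X = 2)
    (hsm : SmoothNormedSpace X)
    (ω : X →ₗ[ℝ] X →ₗ[ℝ] ℝ) (hω : IsSymplecticForm ω)
    (x y : X) (hx : x ≠ 0) (hy : y ≠ 0)
    (w : X) (hw_a : antinorm ω w = 1) (hw_orth : BirkhoffOrth x w) (hw_pos : 0 < ω x w) :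
    Filter.Tendsto (fun t : ℝ => (‖x + t • y‖ - ‖x‖) / t) (𝓝[≠] (0 : ℝ)) (𝓝 (ω y w)) := by
  obtain ⟨h, hhn, hhv⟩ := partA hdim ω hω x hx w hw_a hw_orth hw_pos
  rw [← hhv y]
  exact partB hsm x y hx h hhn
end

section
/- Let X be a smooth Radon plane whose nondegenerate alternating bilinear form [·,·] is normalized so that ‖v‖_a = ‖v‖ for all v ∈ X. Let x, y ∈ X be unit vectors and let w ∈ X satisfy ‖w‖_a = 1, x ⊣_B w, and [x,w] > 0 (that is, w = b(x)). Then y = cm(x,y)·x + sn(x,y)·w, i.e. y = f_x(y)·x + [x,y]·w. -/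
variable {X : Type*} [NormedAddCommGroup X] [NormedSpace ℝ X]

lemma aux_decomp [FiniteDimensional ℝ X] (hdim : Module.finrank ℝ X = 2)
    {p q : X} (hli : LinearIndependent ℝ ![p, q]) (z : X) :
    ∃ a b : ℝ, z = a • p + b • q := by
  have hcard : Fintype.card (Fin 2) = Module.finrank ℝ X := by simp [hdim]
  let B := basisOfLinearIndependentOfCardEqFinrank hli hcard
  have hB : ⇑B = ![p, q] := coe_basisOfLinearIndependentOfCardEqFinrank hli hcard
  refine ⟨B.repr z 0, B.repr z 1, ?_⟩
  have h := B.sum_repr z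
  rw [Fin.sum_univ_two] at h
  rw [show B 0 = p by rw [hB]; rfl, show B 1 = q by rw [hB]; rfl] at h
  exact h.symm

lemma aux_pair_li (u v : X) (hu : u ≠ 0) (hv : v ≠ 0) (horth : BirkhoffOrth u v) :
    LinearIndependent ℝ ![u, v] := by
  rw [LinearIndependent.pair_iff]
  intro s t hst
  by_cases ht : t = 0
  · subst ht
    simp only [zero_smul, add_zero] at hst
    exact ⟨(smul_eq_zero.1 hst).resolve_right hu, rfl⟩
  · exfalso
    have h1 : t • v = (-s) • u := by
      rw [neg_smul]
      exact eq_neg_of_add_eq_zero_right hst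
    have hv' : v = (t⁻¹ * (-s)) • u := by
      rw [mul_smul, ← h1, smul_smul, inv_mul_cancel₀ ht, one_smul]
    set c := t⁻¹ * (-s) with hc
    have hc0 : c ≠ 0 := by
      intro h
      rw [h, zero_smul] at hv'
      exact hv hv'
    have := horth (-c⁻¹)
    rw [hv', smul_smul, neg_mul, inv_mul_cancel₀ hc0, neg_smul, one_smul,
      add_neg_cancel, norm_zero] at this
    exact hu (norm_le_zero_iff.1 this)

lemma aux_orth_functional [FiniteDimensional ℝ X] (hdim : Module.finrank ℝ X = 2)
    (hsm : SmoothNormedSpace X)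
    (F : X → X →L[ℝ] ℝ) (hF : ∀ x : X, x ≠ 0 → IsNormingFunctional x (F x))
    (u v : X) (hu : u ≠ 0) (horth : BirkhoffOrth u v) : F u v = 0 := by
  by_cases hv : v = 0
  · simp [hv]
  have hupos : (0:ℝ) < ‖u‖ := norm_pos_iff.2 hu
  have hli : LinearIndependent ℝ ![u, v] := aux_pair_li u v hu hv horth
  have hcard : Fintype.card (Fin 2) = Module.finrank ℝ X := by simp [hdim]
  let B := basisOfLinearIndependentOfCardEqFinrank hli hcard
  have hB : ⇑B = ![u, v] := coe_basisOfLinearIndependentOfCardEqFinrank hli hcard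
  have hB0 : B 0 = u := by rw [hB]; rfl
  have hB1 : B 1 = v := by rw [hB]; rfl
  let g : X →L[ℝ] ℝ := LinearMap.toContinuousLinearMap (B.coord 0)
  have hgz : ∀ z : X, g z = B.repr z 0 := fun z => rfl
  have hdecomp : ∀ z : X, z = g z • u + (B.repr z 1) • v := by
    intro z
    have h := B.sum_repr z
    rw [Fin.sum_univ_two, hB0, hB1] at h
    rw [hgz]
    exact h.symm
  have hgu : g u = 1 := by rw [hgz, ← hB0, B.repr_self]; simp
  have hgv : g v = 0 := by rw [hgz, ← hB1, B.repr_self]; simp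
  have hbound : ∀ z : X, |g z| * ‖u‖ ≤ ‖z‖ := by
    intro z
    by_cases hz : g z = 0
    · rw [hz]; simp [norm_nonneg]
    · have h1 : z = (g z) • (u + ((g z)⁻¹ * (B.repr z 1)) • v) := by
        rw [smul_add, smul_smul, mul_inv_cancel_left₀ hz]
        exact hdecomp z
      have h2 : ‖z‖ = |g z| * ‖u + ((g z)⁻¹ * (B.repr z 1)) • v‖ := by
        conv_lhs => rw [h1]
        rw [norm_smul, Real.norm_eq_abs]
      calc |g z| * ‖u‖ ≤ |g z| * ‖u + ((g z)⁻¹ * (B.repr z 1)) • v‖ := by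
            gcongr
            exact horth _
        _ = ‖z‖ := h2.symm
  let f : X →L[ℝ] ℝ := ‖u‖ • g
  have hfnorm : IsNormingFunctional u f := by
    constructor
    · refine le_antisymm (ContinuousLinearMap.opNorm_le_bound _ zero_le_one ?_) ?_
      · intro z
        have := hbound z
        simp only [f, ContinuousLinearMap.smul_apply, smul_eq_mul, Real.norm_eq_abs,
          abs_mul, abs_norm, one_mul]
        calc ‖u‖ * |g z| = |g z| * ‖u‖ := mul_comm _ _
          _ ≤ ‖z‖ := this
      · have h1 : ‖u‖ ≤ ‖f‖ * ‖u‖ := by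
          have := f.le_opNorm u
          have hfu : f u = ‖u‖ := by
            simp [f, hgu]
          rw [hfu, Real.norm_eq_abs, abs_of_nonneg (norm_nonneg u)] at this
          exact this
        have := le_of_mul_le_mul_right (by linarith : 1 * ‖u‖ ≤ ‖f‖ * ‖u‖) hupos
        linarith
    · simp [f, hgu]
  have huniq := hsm u hu
  have hFu : F u = f := huniq.unique (hF u hu) hfnorm
  rw [hFu]
  simp [f, hgv]

theorem stmt_4 [FiniteDimensional ℝ X] (hdim : Module.finrank ℝ X = 2)
    (hsm : SmoothNormedSpace X)
    (hRadon : ∀ u v : X, BirkhoffOrth u v → BirkhoffOrth v u)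
    (ω : X →ₗ[ℝ] X →ₗ[ℝ] ℝ) (hω : IsSymplecticForm ω)
    (hnormalized : ∀ v : X, antinorm ω v = ‖v‖)
    (F : X → X →L[ℝ] ℝ) (hF : ∀ x : X, x ≠ 0 → IsNormingFunctional x (F x))
    (x y : X) (hx : ‖x‖ = 1) (hy : ‖y‖ = 1)
    (w : X) (hw_a : antinorm ω w = 1) (hw_orth : BirkhoffOrth x w) (hw_pos : 0 < ω x w) :
    y = F x y • x + ω x y • w := by
  have hx0 : x ≠ 0 := by intro h; rw [h, norm_zero] at hx; norm_num at hx
  have hw_norm : ‖w‖ = 1 := by rw [← hnormalized w]; exact hw_a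
  have hw0 : w ≠ 0 := by intro h; rw [h, norm_zero] at hw_norm; norm_num at hw_norm
  -- antisymmetry
  have hanti : ∀ a b : X, ω a b = - ω b a := by
    intro a b
    have h := hω.1 (a + b)
    simp only [map_add, LinearMap.add_apply, hω.1 a, hω.1 b] at h
    linarith
  -- linear independence of x, w
  have hli : LinearIndependent ℝ ![x, w] := aux_pair_li x w hx0 hw0 hw_orth
  -- the maximizer on the sphere
  have hcont : Continuous fun z : X => |ω w z| := ((ω w).continuous_of_finiteDimensional).abs
  have hxsph : x ∈ Metric.sphere (0 : X) 1 := by simp [hx]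
  obtain ⟨u0, hu0mem, hmax⟩ := (isCompact_sphere (0 : X) 1).exists_isMaxOn ⟨x, hxsph⟩
    hcont.continuousOn
  have hu0 : ‖u0‖ = 1 := by simpa using hu0mem
  -- the antinorm set
  set S : Set ℝ := {r : ℝ | ∃ u : X, ‖u‖ = 1 ∧ r = |ω w u|} with hS
  have hSne : S.Nonempty := ⟨|ω w x|, x, hx, rfl⟩
  have hSub : ∀ r ∈ S, r ≤ |ω w u0| := by
    rintro r ⟨u, hu, rfl⟩
    exact hmax (by simp [hu])
  have hSbdd : BddAbove S := ⟨|ω w u0|, hSub⟩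
  have hsSup : sSup S = 1 := hw_a
  have hle1 : ∀ z : X, ‖z‖ = 1 → |ω w z| ≤ 1 := fun z hz => by
    rw [← hsSup]; exact le_csSup hSbdd ⟨z, hz, rfl⟩
  have hbound2 : ∀ z : X, |ω w z| ≤ ‖z‖ := by
    intro z
    by_cases hz : z = 0
    · simp [hz]
    · have hzpos : (0:ℝ) < ‖z‖ := norm_pos_iff.2 hz
      have h1 : ‖(‖z‖⁻¹ • z)‖ = 1 := by
        rw [norm_smul, Real.norm_eq_abs, abs_of_pos (inv_pos.2 hzpos), inv_mul_cancel₀ hzpos.ne']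
      have h2 := hle1 _ h1
      rw [map_smul, smul_eq_mul, abs_mul, abs_of_pos (inv_pos.2 hzpos)] at h2
      calc |ω w z| = ‖z‖ * (‖z‖⁻¹ * |ω w z|) := by
            field_simp
        _ ≤ ‖z‖ * 1 := by gcongr
        _ = ‖z‖ := mul_one _
  -- upper bound : ω x w ≤ 1
  have hupper : ω x w ≤ 1 := by
    have := hbound2 x
    rw [hx] at this
    have h2 : ω x w = - ω w x := hanti x w
    calc ω x w = - ω w x := h2
      _ ≤ |ω w x| := neg_le_abs _
      _ ≤ 1 := this
  -- lower bound via maximizer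
  have h1le : (1:ℝ) ≤ |ω w u0| := by
    rw [← hsSup]; exact csSup_le hSne hSub
  have hu0orth : BirkhoffOrth u0 w := by
    intro t
    have h1 : ω w (u0 + t • w) = ω w u0 := by
      simp [map_add, map_smul, hω.1 w]
    calc ‖u0‖ = 1 := hu0
      _ ≤ |ω w u0| := h1le
      _ = |ω w (u0 + t • w)| := by rw [h1]
      _ ≤ ‖u0 + t • w‖ := hbound2 _
  have hFwu0 : F w u0 = 0 :=
    aux_orth_functional hdim hsm F hF w u0 hw0 (hRadon u0 w hu0orth)
  have hFwx : F w x = 0 :=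
    aux_orth_functional hdim hsm F hF w x hw0 (hRadon x w hw_orth)
  have hFww : F w w = 1 := by rw [(hF w hw0).2, hw_norm]
  obtain ⟨a, b, hab⟩ := aux_decomp hdim hli u0
  have hb0 : b = 0 := by
    have := hFwu0
    rw [hab] at this
    simp only [map_add, map_smul, smul_eq_mul, hFwx, hFww, mul_zero, mul_one, zero_add] at this
    exact this
  rw [hb0, zero_smul, add_zero] at hab
  have ha : |a| = 1 := by
    have := hu0
    rw [hab, norm_smul, Real.norm_eq_abs, hx, mul_one] at this
    exact this
  have hlower : (1:ℝ) ≤ ω x w := by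
    have h2 : |ω w u0| = ω x w := by
      rw [hab, map_smul, smul_eq_mul, abs_mul, ha, one_mul, hanti w x, abs_neg,
        abs_of_pos hw_pos]
    linarith [h1le, h2.le, h2.ge]
  have hωxw : ω x w = 1 := le_antisymm hupper hlower
  -- final decomposition of y
  have hFxx : F x x = 1 := by rw [(hF x hx0).2, hx]
  have hFxw : F x w = 0 := aux_orth_functional hdim hsm F hF x w hx0 hw_orth
  obtain ⟨s, t, hst⟩ := aux_decomp hdim hli y
  have hFxy : F x y = s := by
    rw [hst]
    simp [map_add, map_smul, hFxx, hFxw]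
  have hωxy : ω x y = t := by
    rw [hst]
    simp [map_add, map_smul, hω.1 x, hωxw]
  rw [hFxy, hωxy, hst]
end

section
/- Let X be a smooth, strictly convex Minkowski plane. Then the norm of X is Euclidean (there exists an inner product ⟨·,·⟩ on X with ⟨v,v⟩ = ‖v‖² for all v) if and only if the outer distortion functional is identically 1, i.e. for all linearly independent unit vectors x, y ∈ X and all c ∈ X, r > 0, α, β > 0 with ‖β·x − c‖ = r, ‖α·y − c‖ = r, and ‖t·x − c‖ ≥ r and ‖t·y − c‖ ≥ r for every t ∈ ℝ, one has α = β. -/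
variable {X : Type*} [NormedAddCommGroup X] [NormedSpace ℝ X]

open Module

noncomputable section Aux

namespace Stmt6

variable (e : Basis (Fin 2) ℝ X)

/-- determinant-like form -/
def DD (u v : X) : ℝ := e.coord 0 u * e.coord 1 v - e.coord 1 u * e.coord 0 v

lemma vec_eq_zero {a : X} (h0 : e.coord 0 a = 0) (h1 : e.coord 1 a = 0) : a = 0 := by
  rw [← e.forall_coord_eq_zero_iff]
  intro i
  fin_cases i <;> assumption

lemma vec_eq {a b : X} (h0 : e.coord 0 a = e.coord 0 b) (h1 : e.coord 1 a = e.coord 1 b) :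
    a = b :=
  sub_eq_zero.mp (vec_eq_zero e (a := a - b) (by rw [map_sub, h0, sub_self])
    (by rw [map_sub, h1, sub_self]))

@[simp] lemma DD_self (u : X) : DD e u u = 0 := by simp [DD]; ring

lemma DD_antisymm (u v : X) : DD e u v = - DD e v u := by simp [DD]; ring

@[simp] lemma DD_zero_right (u : X) : DD e u 0 = 0 := by simp [DD]

@[simp] lemma DD_zero_left (u : X) : DD e 0 u = 0 := by simp [DD]

lemma DD_smul_left (t : ℝ) (u v : X) : DD e (t • u) v = t * DD e u v := by
  simp [DD]; ring

lemma DD_smul_right (t : ℝ) (u v : X) : DD e u (t • v) = t * DD e u v := by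
  simp [DD]; ring

lemma DD_add_left (u u' v : X) : DD e (u + u') v = DD e u v + DD e u' v := by
  simp [DD]; ring

lemma DD_add_right (u v v' : X) : DD e u (v + v') = DD e u v + DD e u v' := by
  simp [DD]; ring

lemma DD_sub_left (u u' v : X) : DD e (u - u') v = DD e u v - DD e u' v := by
  simp [DD]; ring

lemma DD_sub_right (u v v' : X) : DD e u (v - v') = DD e u v - DD e u v' := by
  simp [DD]; ring

lemma DD_neg_left (u v : X) : DD e (-u) v = - DD e u v := by simp [DD]; ring

lemma DD_neg_right (u v : X) : DD e u (-v) = - DD e u v := by simp [DD]; ring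

/-- dependence from vanishing determinant -/
lemma exists_smul_of_DD_eq_zero {u v : X} (h : DD e u v = 0) (hu : u ≠ 0) :
    ∃ t : ℝ, v = t • u := by
  have h1 : e.coord 0 u • v - e.coord 0 v • u = 0 := by
    apply vec_eq_zero e <;> simp [DD] at h ⊢ <;> linarith
  have h2 : e.coord 1 u • v - e.coord 1 v • u = 0 := by
    apply vec_eq_zero e <;> simp [DD] at h ⊢ <;> linarith
  rcases eq_or_ne (e.coord 0 u) 0 with h0 | h0
  · have hne : e.coord 1 u ≠ 0 := by
      intro h1'
      exact hu (vec_eq_zero e h0 h1')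
    refine ⟨e.coord 1 v / e.coord 1 u, ?_⟩
    have : e.coord 1 u • v = e.coord 1 v • u := by
      rw [sub_eq_zero] at h2; exact h2
    rw [div_eq_mul_inv, mul_comm, mul_smul]
    rw [← this, smul_smul, inv_mul_cancel₀ hne, one_smul]
  · refine ⟨e.coord 0 v / e.coord 0 u, ?_⟩
    have : e.coord 0 u • v = e.coord 0 v • u := by
      rw [sub_eq_zero] at h1; exact h1
    rw [div_eq_mul_inv, mul_comm, mul_smul]
    rw [← this, smul_smul, inv_mul_cancel₀ h0, one_smul]

lemma DD_ne_zero {u v : X} (hu : u ≠ 0) (hind : ¬ ∃ t : ℝ, v = t • u) : DD e u v ≠ 0 :=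
  fun h => hind (exists_smul_of_DD_eq_zero e h hu)

/-- Cramer-type identity in dimension 2. -/
lemma cramer (x y a : X) : DD e x y • a = DD e a y • x + DD e x a • y := by
  apply vec_eq e <;> simp [DD] <;> ring


/-- strict convexity: two unit vectors normed by the same functional coincide -/
lemma shared_functional_eq {g : X →L[ℝ] ℝ} (hg : ‖g‖ = 1) {a b : X}
    (ha : ‖a‖ = 1) (hb : ‖b‖ = 1) [StrictConvexSpace ℝ X]
    (hga : g a = 1) (hgb : g b = 1) : a = b := by
  by_contra hne
  have hlt : ‖(1/2 : ℝ) • a + (1/2 : ℝ) • b‖ < 1 :=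
    norm_combo_lt_of_ne (le_of_eq ha) (le_of_eq hb) hne (by norm_num) (by norm_num) (by norm_num)
  have : g ((1/2 : ℝ) • a + (1/2 : ℝ) • b) = 1 := by
    simp [hga, hgb]; norm_num
  have hle : (1:ℝ) ≤ ‖(1/2 : ℝ) • a + (1/2 : ℝ) • b‖ := by
    calc (1:ℝ) = ‖g ((1/2 : ℝ) • a + (1/2 : ℝ) • b)‖ := by rw [this]; simp
    _ ≤ ‖g‖ * ‖(1/2 : ℝ) • a + (1/2 : ℝ) • b‖ := g.le_opNorm _
    _ = ‖(1/2 : ℝ) • a + (1/2 : ℝ) • b‖ := by rw [hg, one_mul]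
  linarith

open Classical in
/-- choice of norming functional -/
def F (x : X) : X →L[ℝ] ℝ :=
  if h : x ≠ 0 then (exists_dual_vector ℝ x (norm_ne_zero_iff.mpr h)).choose else 0

lemma F_norm {x : X} (hx : x ≠ 0) : ‖F x‖ = 1 := by
  rw [F, dif_pos hx]
  exact (exists_dual_vector ℝ x (norm_ne_zero_iff.mpr hx)).choose_spec.1

lemma F_apply {x : X} (hx : x ≠ 0) : F x x = ‖x‖ := by
  rw [F, dif_pos hx]
  exact (exists_dual_vector ℝ x (norm_ne_zero_iff.mpr hx)).choose_spec.2

lemma F_isNorming {x : X} (hx : x ≠ 0) : IsNormingFunctional x (F x) :=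
  ⟨F_norm hx, F_apply hx⟩

lemma F_abs_le {x : X} (hx : x ≠ 0) (w : X) : |F x w| ≤ ‖w‖ := by
  have := (F x).le_opNorm w
  rwa [F_norm hx, one_mul, Real.norm_eq_abs] at this

lemma ne_zero_of_norm_one {x : X} (hx : ‖x‖ = 1) : x ≠ 0 := by
  intro h; rw [h] at hx; simp at hx

/-- unit vector spanning the kernel of `F x`, sign-normalized. -/
def Z (x : X) : X :=
  let w : X := (F x (e 0)) • (e 1) - (F x (e 1)) • (e 0)
  let z : X := ‖w‖⁻¹ • w
  if 0 < DD e z x then z else -z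

section Zprops

variable {x : X} (hx : ‖x‖ = 1)

lemma F_eq_zero_on_basis {x : X} (hx0 : x ≠ 0) (h0 : F x (e 0) = 0) (h1 : F x (e 1) = 0) :
    False := by
  have : (F x : X →ₗ[ℝ] ℝ) = (0 : X →ₗ[ℝ] ℝ) := by
    apply e.ext
    intro i
    fin_cases i <;> simpa
  have hz : F x x = 0 := by
    have := congrFun (congrArg (fun f : X →ₗ[ℝ] ℝ => (f : X → ℝ)) this) x
    simpa using this
  rw [F_apply hx0] at hz
  exact hx0 (norm_eq_zero.mp hz)

lemma Zw_ne_zero (hx0 : x ≠ 0) : (F x (e 0)) • (e 1) - (F x (e 1)) • (e 0) ≠ 0 := by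
  intro h
  apply F_eq_zero_on_basis e hx0
  · have := congrArg (e.coord 1) h
    simpa [map_sub, map_smul] using this
  · have := congrArg (e.coord 0) h
    simpa [map_sub, map_smul] using this

lemma F_w_eq_zero (x : X) : F x ((F x (e 0)) • (e 1) - (F x (e 1)) • (e 0)) = 0 := by
  rw [map_sub, map_smul, map_smul, smul_eq_mul, smul_eq_mul, mul_comm, sub_self]

lemma Z_norm (hx0 : x ≠ 0) : ‖Z e x‖ = 1 := by
  rw [Z]
  have hw := Zw_ne_zero e hx0
  set w : X := (F x (e 0)) • (e 1) - (F x (e 1)) • (e 0) with hwdef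
  have : ‖‖w‖⁻¹ • w‖ = 1 := by
    rw [norm_smul, norm_inv, norm_norm, inv_mul_cancel₀ (norm_ne_zero_iff.mpr hw)]
  split <;> simpa

lemma Z_ker (x : X) : F x (Z e x) = 0 := by
  rw [Z]
  have hFw := F_w_eq_zero e x
  set w : X := (F x (e 0)) • (e 1) - (F x (e 1)) • (e 0) with hwdef
  have : F x (‖w‖⁻¹ • w) = 0 := by rw [map_smul, hFw, smul_zero]
  split <;> simp [this]

lemma Z_pos (hx0 : x ≠ 0) : 0 < DD e (Z e x) x := by
  rw [Z]
  have hw := Zw_ne_zero e hx0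
  have hFw := F_w_eq_zero e x
  set w : X := (F x (e 0)) • (e 1) - (F x (e 1)) • (e 0) with hwdef
  set z : X := ‖w‖⁻¹ • w with hzdef
  have hz0 : z ≠ 0 := smul_ne_zero (inv_ne_zero (norm_ne_zero_iff.mpr hw)) hw
  have hFz : F x z = 0 := by rw [hzdef, map_smul, hFw, smul_zero]
  have hzx : DD e z x ≠ 0 := by
    intro h
    obtain ⟨t, ht⟩ := exists_smul_of_DD_eq_zero e h hz0
    have h2 : F x x = t * F x z := by
      have := congrArg (F x) ht
      simpa [map_smul] using this
    rw [hFz, mul_zero, F_apply hx0] at h2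
    exact hx0 (norm_eq_zero.mp h2)
  split_ifs with h
  · exact h
  · rw [DD_neg_left]
    push_neg at h
    rcases lt_or_eq_of_le h with h' | h'
    · linarith
    · exact (hzx h').elim

end Zprops

section Kernel

variable {u v : X}

lemma Z_ne_zero {x : X} (hx0 : x ≠ 0) : Z e x ≠ 0 :=
  ne_zero_of_norm_one (Z_norm e hx0)

/-- any unit vector in the kernel of `F x` is `± Z e x` -/
lemma ker_unit_eq {x : X} (hx0 : x ≠ 0) {z' : X} (hz' : ‖z'‖ = 1) (hker : F x z' = 0) :
    z' = Z e x ∨ z' = - Z e x := by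
  have hzz' : DD e (Z e x) z' = 0 := by
    have hc := cramer e (Z e x) z' x
    have h := congrArg (F x) hc
    rw [map_smul, map_add, map_smul, map_smul, Z_ker e x, hker, F_apply hx0] at h
    simp only [smul_eq_mul, mul_zero, add_zero, smul_zero] at h
    have hn : ‖x‖ ≠ 0 := norm_ne_zero_iff.mpr hx0
    exact (mul_eq_zero.mp h).resolve_right hn
  obtain ⟨t, ht⟩ := exists_smul_of_DD_eq_zero e hzz' (Z_ne_zero e hx0)
  have hnt : |t| = 1 := by
    have h2 : ‖z'‖ = |t| * ‖Z e x‖ := by rw [ht, norm_smul, Real.norm_eq_abs]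
    rw [hz', Z_norm e hx0, mul_one] at h2
    exact h2.symm
  rcases abs_eq (by norm_num : (0:ℝ) ≤ 1) |>.mp hnt with h1 | h1
  · left; rw [ht, h1, one_smul]
  · right; rw [ht, h1, neg_one_smul]

lemma F_app_one {x : X} (hx : ‖x‖ = 1) : F x x = 1 := by
  rw [F_apply (ne_zero_of_norm_one hx), hx]

/-- if the kernels coincide, the vectors are equal up to sign -/
lemma Z_parallel [StrictConvexSpace ℝ X] (hu : ‖u‖ = 1) (hv : ‖v‖ = 1)
    (h : Z e v = Z e u ∨ Z e v = - Z e u) : u = v ∨ u = -v := by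
  have hu0 := ne_zero_of_norm_one hu
  have hv0 := ne_zero_of_norm_one hv
  have hFu : F u (Z e u) = 0 := Z_ker e u
  have hFv : F v (Z e u) = 0 := by
    rcases h with h | h
    · have h2 := Z_ker e v; rwa [h] at h2
    · have h2 := Z_ker e v; rw [h, map_neg, neg_eq_zero] at h2; exact h2
  have hDzu : DD e (Z e u) u ≠ 0 := ne_of_gt (Z_pos e hu0)
  have key : ∀ a : X, F v a = F u a * F v u := by
    intro a
    have hc := cramer e (Z e u) u a
    have h1 := congrArg (F u) hc
    have h2 := congrArg (F v) hc
    simp only [map_smul, map_add, hFu, hFv, smul_eq_mul, mul_zero, zero_add,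
      F_app_one hu, mul_one] at h1 h2
    -- h1 : DD e (Z e u) u * F u a = DD e (Z e u) a
    -- h2 : DD e (Z e u) u * F v a = DD e (Z e u) a * F v u
    rw [← h1] at h2
    have h3 : DD e (Z e u) u * F v a = DD e (Z e u) u * (F u a * F v u) := by
      linear_combination h2
    exact mul_left_cancel₀ hDzu h3
  have hc1 : F v u * F u v = 1 := by
    have h4 := key v
    rw [F_app_one hv] at h4
    linarith [h4]
  have habs1 : |F v u| ≤ 1 := by simpa [hu] using F_abs_le hv0 u
  have habs2 : |F u v| ≤ 1 := by simpa [hv] using F_abs_le hu0 v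
  have hcval : F v u = 1 ∨ F v u = -1 := by
    have ha1 : |F v u| = 1 := by
      rcases lt_or_ge (|F v u|) 1 with h' | h'
      · exfalso
        have : |F v u * F u v| < 1 := by
          rw [abs_mul]
          calc |F v u| * |F u v| ≤ |F v u| * 1 :=
                mul_le_mul_of_nonneg_left habs2 (abs_nonneg _)
            _ = |F v u| := mul_one _
            _ < 1 := h'
        rw [hc1] at this; norm_num at this
      · linarith
    exact abs_eq (by norm_num : (0:ℝ) ≤ 1) |>.mp ha1
  rcases hcval with hcv | hcv
  · left
    refine shared_functional_eq (F_norm hu0) hu hv (F_app_one hu) ?_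
    rw [hcv, one_mul] at hc1
    exact hc1
  · right
    have hFuv : F u v = -1 := by
      rw [hcv] at hc1; linarith
    refine shared_functional_eq (F_norm hu0) hu (by simpa using hv) (F_app_one hu) ?_
    rw [map_neg, hFuv, neg_neg]

lemma F_neg (hsm : SmoothNormedSpace X) {x : X} (hx0 : x ≠ 0) : F (-x) = - F x := by
  obtain ⟨f, _, huniq⟩ := hsm x hx0
  have h1 : F x = f := huniq _ (F_isNorming hx0)
  have h2 : -F (-x) = f := by
    apply huniq
    constructor
    · rw [norm_neg]; exact F_norm (neg_ne_zero.mpr hx0)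
    · have h3 := F_apply (neg_ne_zero.mpr hx0)
      rw [map_neg, norm_neg] at h3
      simp only [ContinuousLinearMap.neg_apply]
      linarith
  rw [h1, ← h2, neg_neg]

lemma Z_neg (hsm : SmoothNormedSpace X) {x : X} (hx0 : x ≠ 0) : Z e (-x) = - Z e x := by
  have hn0 : (-x) ≠ 0 := neg_ne_zero.mpr hx0
  have hker : F x (Z e (-x)) = 0 := by
    have h1 := Z_ker e (-x)
    rw [F_neg hsm hx0] at h1
    simpa using h1
  rcases ker_unit_eq e hx0 (Z_norm e hn0) hker with h | h
  · exfalso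
    have hp := Z_pos e hn0
    rw [h, DD_neg_right] at hp
    linarith [Z_pos e hx0]
  · exact h

end Kernel

/-- the outer distortion condition -/
def ODOne (X : Type*) [NormedAddCommGroup X] [NormedSpace ℝ X] : Prop :=
  ∀ x y : X, ‖x‖ = 1 → ‖y‖ = 1 → LinearIndependent ℝ ![x, y] →
    ∀ (c : X) (r : ℝ), 0 < r → ∀ α β : ℝ, 0 < α → 0 < β →
      ‖β • x - c‖ = r → ‖α • y - c‖ = r →
      (∀ t : ℝ, r ≤ ‖t • x - c‖) → (∀ t : ℝ, r ≤ ‖t • y - c‖) → α = β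

section Config

variable [StrictConvexSpace ℝ X]

lemma abs_sign (p : ℝ) (hp : p ≠ 0) : ∃ s : ℝ, (s = 1 ∨ s = -1) ∧ |p| * s = p := by
  rcases lt_or_gt_of_ne hp with h | h
  · exact ⟨-1, Or.inr rfl, by rw [abs_of_neg h]; ring⟩
  · exact ⟨1, Or.inl rfl, by rw [abs_of_pos h]; ring⟩

lemma indep_of_Z_indep {u v : X} (hu : ‖u‖ = 1) (hv : ‖v‖ = 1)
    (hind : ¬ ∃ t : ℝ, v = t • u) : DD e (Z e u) (Z e v) ≠ 0 := by
  intro h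
  obtain ⟨t, ht⟩ := exists_smul_of_DD_eq_zero e h (Z_ne_zero e (ne_zero_of_norm_one hu))
  have hnt : |t| = 1 := by
    have h2 : ‖Z e v‖ = |t| * ‖Z e u‖ := by rw [ht, norm_smul, Real.norm_eq_abs]
    rw [Z_norm e (ne_zero_of_norm_one hv), Z_norm e (ne_zero_of_norm_one hu), mul_one] at h2
    exact h2.symm
  have hpm : Z e v = Z e u ∨ Z e v = - Z e u := by
    rcases (abs_eq (by norm_num : (0:ℝ) ≤ 1)).mp hnt with h1 | h1
    · left; rw [ht, h1, one_smul]
    · right; rw [ht, h1, neg_one_smul]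
  rcases Z_parallel e hu hv hpm with h1 | h1
  · exact hind ⟨1, by rw [one_smul, h1]⟩
  · exact hind ⟨-1, by rw [neg_one_smul, h1, neg_neg]⟩

/-- Key application of the outer distortion hypothesis. -/
lemma star (hyp : ODOne X) {u v : X} (hu : ‖u‖ = 1) (hv : ‖v‖ = 1)
    (hind : ¬ ∃ t : ℝ, v = t • u) :
    (DD e (Z e v) v - DD e (Z e v) u)^2 = (DD e (Z e u) u - DD e (Z e u) v)^2 := by
  have hu0 := ne_zero_of_norm_one hu
  have hv0 := ne_zero_of_norm_one hv
  set zu := Z e u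
  set zv := Z e v
  have hdu : DD e zu zv ≠ 0 := indep_of_Z_indep e hu hv hind
  -- coordinates of u - v with respect to zu, zv
  set p : ℝ := DD e (u - v) zv / DD e zu zv with hp_def
  set q : ℝ := DD e zu (u - v) / DD e zu zv with hq_def
  have huv : u - v = p • zu + q • zv := by
    have hc := cramer e zu zv (u - v)
    have h2 : (DD e zu zv)⁻¹ • (DD e zu zv • (u - v)) =
        (DD e zu zv)⁻¹ • (DD e (u - v) zv • zu + DD e zu (u - v) • zv) := by rw [hc]
    rw [smul_smul, inv_mul_cancel₀ hdu, one_smul, smul_add, smul_smul, smul_smul] at h2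
    rw [h2, hp_def, hq_def]
    rw [div_eq_inv_mul, div_eq_inv_mul]
  have hp0 : p ≠ 0 := by
    intro h
    rw [h, zero_smul, zero_add] at huv
    have h2 : F v (u - v) = 0 := by rw [huv, map_smul, Z_ker e v, smul_zero]
    rw [map_sub, F_app_one hv, sub_eq_zero] at h2
    have h3 : v = u := shared_functional_eq (F_norm hv0) hv hu (F_app_one hv) h2
    exact hind ⟨1, by rw [one_smul, ← h3]⟩
  have hq0 : q ≠ 0 := by
    intro h
    rw [h, zero_smul, add_zero] at huv
    have h2 : F u (u - v) = 0 := by rw [huv, map_smul, Z_ker e u, smul_zero]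
    rw [map_sub, F_app_one hu, sub_eq_zero] at h2
    have h3 : u = v := shared_functional_eq (F_norm hu0) hu hv (F_app_one hu) h2.symm
    exact hind ⟨1, by rw [one_smul, h3]⟩
  obtain ⟨sp, hsp_pm, hsp⟩ := abs_sign p hp0
  obtain ⟨sq, hsq_pm, hsq⟩ := abs_sign q hq0
  -- the circle configuration
  set x : X := sp • zu with hx_def
  set y : X := (-sq) • zv with hy_def
  have hzu_norm : ‖zu‖ = 1 := Z_norm e hu0
  have hzv_norm : ‖zv‖ = 1 := Z_norm e hv0
  have hx_norm : ‖x‖ = 1 := by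
    rw [hx_def, norm_smul, Real.norm_eq_abs, hzu_norm, mul_one]
    rcases hsp_pm with h | h <;> rw [h] <;> norm_num
  have hy_norm : ‖y‖ = 1 := by
    rw [hy_def, norm_smul, Real.norm_eq_abs, hzv_norm, mul_one]
    rcases hsq_pm with h | h <;> rw [h] <;> norm_num
  have hβx : |p| • x = p • zu := by rw [hx_def, smul_smul, hsp]
  have hαy : |q| • y = (-q) • zv := by
    rw [hy_def, smul_smul]
    congr 1
    rw [mul_neg, hsq]
  set c : X := p • zu - u with hc_def
  have h2 : v = u - p • zu - q • zv := by rw [sub_sub, ← huv]; abel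
  have hbxc : |p| • x - c = u := by rw [hβx, hc_def]; abel
  have haycv : |q| • y - c = v := by
    rw [hαy, hc_def, h2]; module
  have hLI : LinearIndependent ℝ ![x, y] := by
    rw [linearIndependent_fin2]
    constructor
    · simp only [Matrix.cons_val_one, Matrix.head_cons]
      exact ne_zero_of_norm_one hy_norm
    · intro a h
      simp only [Matrix.cons_val_one, Matrix.head_cons, Matrix.cons_val_zero] at h
      have h3 : DD e x zv = 0 := by
        rw [← h, hy_def, DD_smul_left, DD_smul_left, DD_self]; ring
      rw [hx_def, DD_smul_left] at h3
      rcases hsp_pm with hs | hs <;> rw [hs] at h3 <;> simp at h3 <;> exact hdu h3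
  have habs_p : 0 < |p| := abs_pos.mpr hp0
  have habs_q : 0 < |q| := abs_pos.mpr hq0
  have htx : ∀ t : ℝ, 1 ≤ ‖t • x - c‖ := by
    intro t
    have hrep : t • x - c = (t * sp - p) • zu + u := by
      rw [hx_def, hc_def]
      module
    have hF : F u (t • x - c) = 1 := by
      rw [hrep, map_add, map_smul, Z_ker e u, smul_zero, zero_add, F_app_one hu]
    have h4 := F_abs_le hu0 (t • x - c)
    rw [hF] at h4
    simpa using h4
  have hty : ∀ t : ℝ, 1 ≤ ‖t • y - c‖ := by
    intro t
    have hrep : t • y - c = (q - t * sq) • zv + v := by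
      rw [hy_def, hc_def, h2]
      module
    have hF : F v (t • y - c) = 1 := by
      rw [hrep, map_add, map_smul, Z_ker e v, smul_zero, zero_add, F_app_one hv]
    have h4 := F_abs_le hv0 (t • y - c)
    rw [hF] at h4
    simpa using h4
  have hEq : |q| = |p| :=
    hyp x y hx_norm hy_norm hLI c 1 one_pos (|q|) (|p|) habs_q habs_p
      (by rw [hbxc, hu]) (by rw [haycv, hv]) htx hty
  -- conclude
  have hsq_eq : p^2 = q^2 := by
    have := congrArg (fun t => t^2) hEq
    simpa [sq_abs] using this.symm
  have hpval : DD e zv v - DD e zv u = p * DD e zu zv := by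
    rw [hp_def, div_mul_cancel₀ _ hdu, DD_sub_left, DD_antisymm e u zv, DD_antisymm e v zv]
    ring
  have hqval : DD e zu u - DD e zu v = q * DD e zu zv := by
    rw [hq_def, div_mul_cancel₀ _ hdu, DD_sub_right]
  rw [hpval, hqval, mul_pow, mul_pow, hsq_eq]

/-- the two fundamental identities -/
lemma E_identities (hsm : SmoothNormedSpace X) (hyp : ODOne X) {u v : X}
    (hu : ‖u‖ = 1) (hv : ‖v‖ = 1) (hind : ¬ ∃ t : ℝ, v = t • u) :
    DD e (Z e v) v * DD e (Z e v) u = DD e (Z e u) u * DD e (Z e u) v ∧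
    (DD e (Z e v) v)^2 + (DD e (Z e v) u)^2 = (DD e (Z e u) u)^2 + (DD e (Z e u) v)^2 := by
  have hv0 := ne_zero_of_norm_one hv
  have h1 := star e hyp hu hv hind
  have hind2 : ¬ ∃ t : ℝ, -v = t • u := by
    rintro ⟨t, ht⟩
    exact hind ⟨-t, by rw [neg_smul, ← ht, neg_neg]⟩
  have h2 := star e hyp hu (by rwa [norm_neg]) hind2
  rw [Z_neg e hsm hv0, DD_neg_left, DD_neg_left, DD_neg_right, DD_neg_right] at h2
  constructor
  · linear_combination (h2 - h1) / 4
  · linear_combination (h1 + h2) / 2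

/-- consequence when the diagonal values differ -/
lemma cross_values (hsm : SmoothNormedSpace X) (hyp : ODOne X) {u v : X}
    (hu : ‖u‖ = 1) (hv : ‖v‖ = 1) (hind : ¬ ∃ t : ℝ, v = t • u)
    (hne : (DD e (Z e u) u)^2 ≠ (DD e (Z e v) v)^2) :
    (DD e (Z e v) u)^2 = (DD e (Z e u) u)^2 ∧
    (DD e (Z e u) v)^2 = (DD e (Z e v) v)^2 := by
  obtain ⟨e1, e2⟩ := E_identities e hsm hyp hu hv hind
  set a := DD e (Z e u) u
  set b := DD e (Z e u) v
  set cc := DD e (Z e v) v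
  set d := DD e (Z e v) u
  -- e1 : cc * d = a * b, e2 : cc^2 + d^2 = a^2 + b^2
  have key1 : (a^2 - cc^2) * (a^2 - d^2) = 0 := by
    linear_combination (-(a^2)) * e2 + (cc*d + a*b) * e1
  have key2 : (cc^2 - a^2) * (cc^2 - b^2) = 0 := by
    linear_combination (cc^2) * e2 - (a*b + cc*d) * e1
  constructor
  · rcases mul_eq_zero.mp key1 with h | h
    · exact absurd (by linarith : a^2 = cc^2) hne
    · linarith
  · rcases mul_eq_zero.mp key2 with h | h
    · exact absurd (by linarith : a^2 = cc^2) hne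
    · linarith

include e in
/-- the unit sphere is infinite -/
lemma sphere_infinite : {w : X | ‖w‖ = 1}.Infinite := by
  have h0 : ∀ t : ℝ, e 0 + t • e 1 ≠ 0 := by
    intro t h
    have := congrArg (e.coord 0) h
    simp [map_add, map_smul] at this
  refine Set.infinite_of_injective_forall_mem
    (f := fun t : ℝ => ‖e 0 + t • e 1‖⁻¹ • (e 0 + t • e 1)) ?_ ?_
  · intro s t hst
    have hs := h0 s
    have ht := h0 t
    have h1 := congrArg (e.coord 0) hst
    have h2 := congrArg (e.coord 1) hst
    simp [map_add, map_smul] at h1 h2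
    have hns : ‖e 0 + s • e 1‖ ≠ 0 := norm_ne_zero_iff.mpr hs
    have hnt : ‖e 0 + t • e 1‖ ≠ 0 := norm_ne_zero_iff.mpr ht
    have h3 : ‖e 0 + s • e 1‖⁻¹ = ‖e 0 + t • e 1‖⁻¹ := by simpa using h1
    rw [h3] at h2
    have h4 : ‖e 0 + t • e 1‖⁻¹ ≠ 0 := inv_ne_zero hnt
    field_simp at h2
    tauto
  · intro t
    simp only [Set.mem_setOf_eq]
    rw [norm_smul, norm_inv, norm_norm, inv_mul_cancel₀ (norm_ne_zero_iff.mpr (h0 t))]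

/-- a level set of a nonzero linear functional meets the unit sphere in at most 2 points -/
lemma level_set_finite {z : X} (hz : z ≠ 0) (cst : ℝ) :
    {w : X | ‖w‖ = 1 ∧ DD e z w = cst}.Finite := by
  set L := {w : X | ‖w‖ = 1 ∧ DD e z w = cst} with hL
  have key : ∀ a ∈ L, ∀ b ∈ L, ∀ w ∈ L, a ≠ b → w = a ∨ w = b := by
    rintro a ⟨han, haD⟩ b ⟨hbn, hbD⟩ w ⟨hwn, hwD⟩ hab
    by_contra hcon
    push_neg at hcon
    obtain ⟨hwa, hwb⟩ := hcon
    have hd1 : DD e z (b - a) = 0 := by rw [DD_sub_right, haD, hbD, sub_self]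
    have hd2 : DD e z (w - a) = 0 := by rw [DD_sub_right, haD, hwD, sub_self]
    obtain ⟨t1, ht1⟩ := exists_smul_of_DD_eq_zero e hd1 hz
    obtain ⟨t2, ht2⟩ := exists_smul_of_DD_eq_zero e hd2 hz
    have ht1ne : t1 ≠ 0 := by
      intro h; rw [h, zero_smul] at ht1
      exact hab (sub_eq_zero.mp ht1).symm
    set t := t2 / t1 with htdef
    have hw : w = a + t • (b - a) := by
      rw [htdef, ht1, smul_smul, div_mul_cancel₀ _ ht1ne, ← ht2]
      abel
    have htne0 : t ≠ 0 := by
      intro h; rw [h, zero_smul, add_zero] at hw; exact hwa hw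
    have htne1 : t ≠ 1 := by
      intro h; rw [h, one_smul] at hw
      apply hwb; rw [hw]; abel
    rcases lt_trichotomy t 0 with htl | htl | htl
    · -- a is a proper combination of w and b
      have h1t : (0:ℝ) < 1 - t := by linarith
      have hcomb : a = (1/(1-t)) • w + (-t/(1-t)) • b := by
        rw [hw]
        match_scalars <;> field_simp <;> ring_nf
      have hlt := norm_combo_lt_of_ne (a := 1/(1-t)) (b := -t/(1-t))
        (le_of_eq hwn) (le_of_eq hbn) hwb
        (div_pos one_pos h1t) (div_pos (by linarith) h1t)
        (by rw [← add_div, ← sub_eq_add_neg, div_self (ne_of_gt h1t)])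
      rw [← hcomb, han] at hlt
      exact lt_irrefl _ hlt
    · exact htne0 htl
    · rcases lt_trichotomy t 1 with ht1' | ht1' | ht1'
      · -- w is a proper combination of a and b
        have hcomb : w = (1-t) • a + t • b := by rw [hw]; module
        have hlt := norm_combo_lt_of_ne (a := 1-t) (b := t)
          (le_of_eq han) (le_of_eq hbn) hab
          (by linarith) htl (by ring)
        rw [← hcomb, hwn] at hlt
        exact lt_irrefl _ hlt
      · exact htne1 ht1'
      · -- b is a proper combination of a and w
        have htpos : (0:ℝ) < t := by linarith
        have hcomb : b = (1 - 1/t) • a + (1/t) • w := by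
          rw [hw]
          match_scalars <;> field_simp <;> ring_nf
        have hlt := norm_combo_lt_of_ne (a := 1 - 1/t) (b := 1/t)
          (le_of_eq han) (le_of_eq hwn) (Ne.symm hwa)
          (by rw [sub_pos, div_lt_one htpos]; linarith)
          (div_pos one_pos htpos)
          (by ring)
        rw [← hcomb, hbn] at hlt
        exact lt_irrefl _ hlt
  by_cases hnt : L.Nontrivial
  · obtain ⟨a, ha, b, hb, hab⟩ := hnt
    apply Set.Finite.subset ((Set.finite_singleton b).insert a)
    intro w hw
    rcases key a ha b hb w hw hab with h | h <;> simp [h]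
  · rw [Set.not_nontrivial_iff] at hnt
    exact hnt.finite

end Config

section Final

variable [StrictConvexSpace ℝ X]

lemma pm_of_smul_units {u v : X} (hu : ‖u‖ = 1) (hv : ‖v‖ = 1) {t : ℝ} (ht : v = t • u) :
    v = u ∨ v = -u := by
  have hnt : |t| = 1 := by
    have h2 : ‖v‖ = |t| * ‖u‖ := by rw [ht, norm_smul, Real.norm_eq_abs]
    rw [hu, hv, mul_one] at h2
    exact h2.symm
  rcases (abs_eq (by norm_num : (0:ℝ) ≤ 1)).mp hnt with h1 | h1
  · left; rw [ht, h1, one_smul]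
  · right; rw [ht, h1, neg_one_smul]

lemma h_eq_of_pm (hsm : SmoothNormedSpace X) {u v : X} (hu : ‖u‖ = 1)
    (hpm : v = u ∨ v = -u) : DD e (Z e v) v = DD e (Z e u) u := by
  rcases hpm with h | h
  · rw [h]
  · rw [h, Z_neg e hsm (ne_zero_of_norm_one hu), DD_neg_left, DD_neg_right, neg_neg]

lemma h_const (hsm : SmoothNormedSpace X) (hyp : ODOne X) {u v : X}
    (hu : ‖u‖ = 1) (hv : ‖v‖ = 1) : DD e (Z e u) u = DD e (Z e v) v := by
  by_contra hne
  have hku : 0 < DD e (Z e u) u := Z_pos e (ne_zero_of_norm_one hu)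
  have hkv : 0 < DD e (Z e v) v := Z_pos e (ne_zero_of_norm_one hv)
  have hsq_ne : (DD e (Z e u) u)^2 ≠ (DD e (Z e v) v)^2 := by
    intro h
    have h3 : (DD e (Z e u) u - DD e (Z e v) v) * (DD e (Z e u) u + DD e (Z e v) v) = 0 := by
      linear_combination h
    rcases mul_eq_zero.mp h3 with h4 | h4
    · exact hne (by linarith)
    · linarith
  -- u,v are independent
  have hZne : Z e u - Z e v ≠ 0 ∧ Z e u + Z e v ≠ 0 := by
    constructor <;> intro h0
    · have h5 : Z e v = Z e u := (sub_eq_zero.mp h0).symm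
      exact hne (h_eq_of_pm e hsm hv (Z_parallel e hu hv (Or.inl h5)))
    · have h5 : Z e v = - Z e u := eq_neg_of_add_eq_zero_right h0
      exact hne (h_eq_of_pm e hsm hv (Z_parallel e hu hv (Or.inr h5)))
  -- the sphere is covered by six small sets
  have cover : {w : X | ‖w‖ = 1} ⊆
      ({w : X | ‖w‖ = 1 ∧ DD e (Z e v) w = DD e (Z e u) u} ∪
       {w : X | ‖w‖ = 1 ∧ DD e (Z e v) w = -(DD e (Z e u) u)}) ∪
      ({w : X | ‖w‖ = 1 ∧ DD e (Z e u) w = DD e (Z e v) v} ∪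
       {w : X | ‖w‖ = 1 ∧ DD e (Z e u) w = -(DD e (Z e v) v)}) ∪
      ({w : X | ‖w‖ = 1 ∧ DD e (Z e u - Z e v) w = 0} ∪
       {w : X | ‖w‖ = 1 ∧ DD e (Z e u + Z e v) w = 0}) := by
    intro w hw
    simp only [Set.mem_setOf_eq] at hw
    by_cases h1 : DD e (Z e w) w = DD e (Z e u) u
    · -- pair (v, w)
      have hind : ¬ ∃ t : ℝ, w = t • v := by
        rintro ⟨t, ht⟩
        have h6 := h_eq_of_pm e hsm hv (pm_of_smul_units hv hw ht)
        rw [h1] at h6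
        exact hne h6
      have hcv := (cross_values e hsm hyp hv hw hind
        (by rw [h1]; exact fun hh => hsq_ne hh.symm)).2
      rw [h1] at hcv
      have h3 : (DD e (Z e v) w - DD e (Z e u) u) * (DD e (Z e v) w + DD e (Z e u) u) = 0 := by
        linear_combination hcv
      rcases mul_eq_zero.mp h3 with h4 | h4
      · exact Or.inl (Or.inl (Or.inl ⟨hw, by linarith⟩))
      · exact Or.inl (Or.inl (Or.inr ⟨hw, by linarith⟩))
    · by_cases h2 : DD e (Z e w) w = DD e (Z e v) v
      · -- pair (u, w)
        have hind : ¬ ∃ t : ℝ, w = t • u := by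
          rintro ⟨t, ht⟩
          have h6 := h_eq_of_pm e hsm hu (pm_of_smul_units hu hw ht)
          rw [h2] at h6
          exact hne h6.symm
        have hcv := (cross_values e hsm hyp hu hw hind (by rw [h2]; exact hsq_ne)).2
        rw [h2] at hcv
        have h3 : (DD e (Z e u) w - DD e (Z e v) v) * (DD e (Z e u) w + DD e (Z e v) v) = 0 := by
          linear_combination hcv
        rcases mul_eq_zero.mp h3 with h4 | h4
        · exact Or.inl (Or.inr (Or.inl ⟨hw, by linarith⟩))
        · exact Or.inl (Or.inr (Or.inr ⟨hw, by linarith⟩))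
      · -- pair (u, w) and (v, w)
        have hindu : ¬ ∃ t : ℝ, w = t • u := by
          rintro ⟨t, ht⟩
          exact h1 (h_eq_of_pm e hsm hu (pm_of_smul_units hu hw ht))
        have hindv : ¬ ∃ t : ℝ, w = t • v := by
          rintro ⟨t, ht⟩
          exact h2 (h_eq_of_pm e hsm hv (pm_of_smul_units hv hw ht))
        have hkw : 0 < DD e (Z e w) w := Z_pos e (ne_zero_of_norm_one hw)
        have hsqu : (DD e (Z e u) u)^2 ≠ (DD e (Z e w) w)^2 := by
          intro h
          have h3 : (DD e (Z e u) u - DD e (Z e w) w) * (DD e (Z e u) u + DD e (Z e w) w) = 0 := by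
            linear_combination h
          rcases mul_eq_zero.mp h3 with h4 | h4
          · exact h1 (by linarith)
          · linarith
        have hsqv : (DD e (Z e v) v)^2 ≠ (DD e (Z e w) w)^2 := by
          intro h
          have h3 : (DD e (Z e v) v - DD e (Z e w) w) * (DD e (Z e v) v + DD e (Z e w) w) = 0 := by
            linear_combination h
          rcases mul_eq_zero.mp h3 with h4 | h4
          · exact h2 (by linarith)
          · linarith
        have hcu := (cross_values e hsm hyp hu hw hindu hsqu).2
        have hcvv := (cross_values e hsm hyp hv hw hindv hsqv).2
        have h3 : (DD e (Z e u) w - DD e (Z e v) w) * (DD e (Z e u) w + DD e (Z e v) w) = 0 := by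
          linear_combination hcu - hcvv
        rcases mul_eq_zero.mp h3 with h4 | h4
        · refine Or.inr (Or.inl ⟨hw, ?_⟩)
          rw [DD_sub_left]; linarith
        · refine Or.inr (Or.inr ⟨hw, ?_⟩)
          rw [DD_add_left]; linarith
  have hfin : ({w : X | ‖w‖ = 1}).Finite := by
    apply Set.Finite.subset _ cover
    have hzv : Z e v ≠ 0 := Z_ne_zero e (ne_zero_of_norm_one hv)
    have hzu : Z e u ≠ 0 := Z_ne_zero e (ne_zero_of_norm_one hu)
    exact (((level_set_finite e hzv _).union (level_set_finite e hzv _)).union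
      ((level_set_finite e hzu _).union (level_set_finite e hzu _))).union
      ((level_set_finite e hZne.1 _).union (level_set_finite e hZne.2 _))
  exact (sphere_infinite e) hfin

lemma H_symm (hsm : SmoothNormedSpace X) (hyp : ODOne X) {u v : X}
    (hu : ‖u‖ = 1) (hv : ‖v‖ = 1) : DD e (Z e u) v = DD e (Z e v) u := by
  by_cases hind : ∃ t : ℝ, v = t • u
  · obtain ⟨t, ht⟩ := hind
    rcases pm_of_smul_units hu hv ht with h | h
    · rw [h]
    · rw [h, Z_neg e hsm (ne_zero_of_norm_one hu), DD_neg_left, DD_neg_right]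
  · have hE := (E_identities e hsm hyp hu hv hind).1
    have hk := h_const e hsm hyp hu hv
    rw [← hk] at hE
    exact (mul_left_cancel₀ (ne_of_gt (Z_pos e (ne_zero_of_norm_one hu))) hE).symm

open Classical in
/-- homogeneous extension of `Z` -/
def gmap : X → X := fun w => if w = 0 then 0 else ‖w‖ • Z e (‖w‖⁻¹ • w)

lemma gmap_zero : gmap e (0 : X) = 0 := by rw [gmap]; simp

lemma gmap_ne {w : X} (hw : w ≠ 0) : gmap e w = ‖w‖ • Z e (‖w‖⁻¹ • w) := by
  rw [gmap]; simp [hw]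

lemma unit_normalize {w : X} (hw : w ≠ 0) : ‖‖w‖⁻¹ • w‖ = 1 := by
  rw [norm_smul, norm_inv, norm_norm, inv_mul_cancel₀ (norm_ne_zero_iff.mpr hw)]

lemma gmap_symm (hsm : SmoothNormedSpace X) (hyp : ODOne X) (a b : X) :
    DD e (gmap e a) b = DD e (gmap e b) a := by
  by_cases ha : a = 0
  · rw [ha, gmap_zero, DD_zero_left, DD_zero_right]
  by_cases hb : b = 0
  · rw [hb, gmap_zero, DD_zero_left, DD_zero_right]
  have hna : ‖a‖ ≠ 0 := norm_ne_zero_iff.mpr ha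
  have hnb : ‖b‖ ≠ 0 := norm_ne_zero_iff.mpr hb
  have key : ∀ c d : X, (hc : c ≠ 0) → (hd : d ≠ 0) →
      DD e (gmap e c) d = ‖c‖ * (‖d‖ * DD e (Z e (‖c‖⁻¹ • c)) (‖d‖⁻¹ • d)) := by
    intro c d hc hd
    rw [gmap_ne e hc, DD_smul_left]
    congr 1
    conv_lhs => rw [← smul_inv_smul₀ (norm_ne_zero_iff.mpr hd) d]
    rw [DD_smul_right]
  rw [key a b ha hb, key b a hb ha,
    H_symm e hsm hyp (unit_normalize ha) (unit_normalize hb)]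
  ring

lemma gmap_quad (hsm : SmoothNormedSpace X) (hyp : ODOne X) {u0 : X} (hu0 : ‖u0‖ = 1)
    (v : X) : DD e (gmap e v) v = DD e (Z e u0) u0 * ‖v‖^2 := by
  by_cases hv : v = 0
  · rw [hv, gmap_zero, DD_zero_left]; simp
  have hnv : ‖v‖ ≠ 0 := norm_ne_zero_iff.mpr hv
  rw [gmap_ne e hv, DD_smul_left]
  have h1 : DD e (Z e (‖v‖⁻¹ • v)) v = ‖v‖ * DD e (Z e (‖v‖⁻¹ • v)) (‖v‖⁻¹ • v) := by
    rw [DD_smul_right]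
    field_simp
  rw [h1, h_const e hsm hyp (unit_normalize hv) hu0]
  ring

/-- the reverse direction: outer distortion one implies Euclidean -/
lemma reverse_direction [FiniteDimensional ℝ X] (hdim : Module.finrank ℝ X = 2)
    (hsm : SmoothNormedSpace X) (hyp : ODOne X) :
    ∃ B : X →ₗ[ℝ] X →ₗ[ℝ] ℝ, (∀ u v : X, B u v = B v u) ∧ ∀ v : X, B v v = ‖v‖ ^ 2 := by
  let e : Basis (Fin 2) ℝ X := Module.finBasisOfFinrankEq ℝ X hdim
  have he0 : e 0 ≠ 0 := e.ne_zero 0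
  set u0 : X := ‖e 0‖⁻¹ • e 0 with hu0def
  have hu0 : ‖u0‖ = 1 := unit_normalize he0
  set k : ℝ := DD e (Z e u0) u0 with hkdef
  have hk : 0 < k := Z_pos e (ne_zero_of_norm_one hu0)
  have hsymm := gmap_symm e hsm hyp
  refine ⟨LinearMap.mk₂ ℝ (fun a b => k⁻¹ * DD e (gmap e a) b) ?_ ?_ ?_ ?_, ?_, ?_⟩
  · intro m1 m2 n
    rw [hsymm (m1 + m2) n, DD_add_right, hsymm n m1, hsymm n m2]
    ring
  · intro cc m n
    rw [hsymm (cc • m) n, DD_smul_right, hsymm n m, smul_eq_mul]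
    ring
  · intro m n1 n2
    rw [DD_add_right]
    ring
  · intro cc m n
    rw [DD_smul_right, smul_eq_mul]
    ring
  · intro u v
    rw [LinearMap.mk₂_apply, LinearMap.mk₂_apply, hsymm u v]
  · intro v
    rw [LinearMap.mk₂_apply, gmap_quad e hsm hyp hu0 v, ← hkdef]
    field_simp

/-- the forward direction -/
lemma forward {B : X →ₗ[ℝ] X →ₗ[ℝ] ℝ} (hsymm : ∀ u v : X, B u v = B v u)
    (hq : ∀ v : X, B v v = ‖v‖ ^ 2) : ODOne X := by
  intro x y hx hy _ c r hr α β hα hβ hβx hαy htx hty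
  have expand : ∀ (w : X) (t : ℝ), ‖w‖ = 1 →
      ‖t • w - c‖^2 = t^2 - 2*t*(B w c) + B c c := by
    intro w t hw
    rw [← hq (t • w - c), map_sub, map_smul]
    simp only [LinearMap.sub_apply, LinearMap.smul_apply, map_sub, map_smul, smul_eq_mul]
    rw [hq w, hw, hsymm c w]
    norm_num
    ring
  have key : ∀ (w : X), ‖w‖ = 1 → ∀ s : ℝ, 0 < s → ‖s • w - c‖ = r →
      (∀ t : ℝ, r ≤ ‖t • w - c‖) → s^2 = B c c - r^2 := by
    intro w hw s hs hsr htw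
    have hQs : s^2 - 2*s*(B w c) + B c c = r^2 := by
      rw [← expand w s hw, hsr]
    have hQmin : r^2 ≤ (B w c)^2 - 2*(B w c)*(B w c) + B c c := by
      have h1 := htw (B w c)
      have h2 : r^2 ≤ ‖(B w c) • w - c‖^2 := by
        have := pow_le_pow_left₀ (le_of_lt hr) h1 2
        linarith [this]
      rw [expand w (B w c) hw] at h2
      linarith
    have hsq : (s - B w c)^2 ≤ 0 := by nlinarith
    have hseq : s = B w c := by nlinarith [sq_nonneg (s - B w c)]
    rw [hseq] at hQs ⊢
    linarith
  have hβ2 := key x hx β hβ hβx htx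
  have hα2 := key y hy α hα hαy hty
  have h3 : (α - β) * (α + β) = 0 := by linear_combination hα2 - hβ2
  rcases mul_eq_zero.mp h3 with h4 | h4
  · linarith
  · linarith

end Final

end Stmt6

end Aux

theorem stmt_6 [FiniteDimensional ℝ X] (hdim : Module.finrank ℝ X = 2)
    [StrictConvexSpace ℝ X] (hsm : SmoothNormedSpace X) :
    (∃ B : X →ₗ[ℝ] X →ₗ[ℝ] ℝ, (∀ u v : X, B u v = B v u) ∧ ∀ v : X, B v v = ‖v‖ ^ 2) ↔
    (∀ x y : X, ‖x‖ = 1 → ‖y‖ = 1 → LinearIndependent ℝ ![x, y] →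
      ∀ (c : X) (r : ℝ), 0 < r → ∀ α β : ℝ, 0 < α → 0 < β →
        ‖β • x - c‖ = r → ‖α • y - c‖ = r →
        (∀ t : ℝ, r ≤ ‖t • x - c‖) → (∀ t : ℝ, r ≤ ‖t • y - c‖) → α = β) := by
  constructor
  · rintro ⟨B, hs, hq⟩
    exact Stmt6.forward hs hq
  · intro hyp
    exact Stmt6.reverse_direction hdim hsm hyp
end

section
/- Let X be a smooth, strictly convex Minkowski plane and let x, y ∈ X be linearly independent unit vectors with x ⊣_B y. Suppose there exist c ∈ X, r > 0 and α > 0 such that ‖α·x − c‖ = r, ‖α·y − c‖ = r, and ‖t·x − c‖ ≥ r and ‖t·y − c‖ ≥ r for every t ∈ ℝ (i.e. some circle inscribed in the angle formed by the rays from the origin through x and y touches the two rays at points α·x and α·y equidistant from the origin, so γ(x,y) = 1). Then y ⊣_B x. -/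
variable {X : Type*} [NormedAddCommGroup X] [NormedSpace ℝ X]

/-- In a two-dimensional space, if `a ⊣_B b` (with `a, b ≠ 0`), then there is a functional of
norm at most one attaining `‖a‖` at `a` and vanishing at `b`. -/
lemma key_functional [FiniteDimensional ℝ X] (hdim : Module.finrank ℝ X = 2)
    (a b : X) (ha : a ≠ 0) (hb : b ≠ 0) (hab : BirkhoffOrth a b) :
    ∃ f : X →L[ℝ] ℝ, ‖f‖ ≤ 1 ∧ f a = ‖a‖ ∧ f b = 0 := by
  have hli : LinearIndependent ℝ ![a, b] := by
    rw [linearIndependent_fin2]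
    refine ⟨by simpa using hb, fun s hs => ?_⟩
    simp only [Matrix.cons_val_one, Matrix.head_cons, Matrix.cons_val_zero] at hs
    have h := hab (-s)
    rw [← hs, neg_smul, add_neg_cancel, norm_zero] at h
    exact ha (hs ▸ norm_le_zero_iff.mp h)
  have hcard : Fintype.card (Fin 2) = Module.finrank ℝ X := by simp [hdim]
  set B : Module.Basis (Fin 2) ℝ X := basisOfLinearIndependentOfCardEqFinrank hli hcard with hBdef
  have hB : ⇑B = ![a, b] := coe_basisOfLinearIndependentOfCardEqFinrank hli hcard
  have hB0 : B 0 = a := by rw [hB]; rfl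
  have hB1 : B 1 = b := by rw [hB]; rfl
  set f : X →L[ℝ] ℝ := LinearMap.toContinuousLinearMap (‖a‖ • (B.coord 0)) with hfdef
  have hfz : ∀ z : X, f z = ‖a‖ * B.repr z 0 := by
    intro z
    simp [hfdef, Module.Basis.coord_apply]
  have hrepr : ∀ z : X, z = B.repr z 0 • a + B.repr z 1 • b := by
    intro z
    conv_lhs => rw [← B.sum_repr z]
    rw [Fin.sum_univ_two, hB0, hB1]
  have hbound : ∀ z : X, ‖a‖ * |B.repr z 0| ≤ ‖z‖ := by
    intro z
    set p := B.repr z 0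
    set q := B.repr z 1
    rcases eq_or_ne p 0 with hp | hp
    · simp [hp, norm_nonneg]
    · have hz : z = p • (a + (q / p) • b) := by
        rw [smul_add, smul_smul]
        field_simp
        exact hrepr z
      calc ‖a‖ * |p| ≤ ‖a + (q / p) • b‖ * |p| := by
            have := hab (q / p)
            exact mul_le_mul_of_nonneg_right this (abs_nonneg _)
        _ = ‖z‖ := by rw [hz, norm_smul, Real.norm_eq_abs]; ring
  refine ⟨f, ?_, ?_, ?_⟩
  · refine ContinuousLinearMap.opNorm_le_bound f zero_le_one fun z => ?_
    rw [one_mul, Real.norm_eq_abs, hfz, abs_mul, abs_of_nonneg (norm_nonneg a)]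
    exact hbound z
  · rw [hfz, ← hB0, B.repr_self]
    simp
  · rw [hfz, ← hB1, B.repr_self]
    simp

/-- A functional of norm at most one is bounded by the norm. -/
lemma le_norm_of_le_one {f : X →L[ℝ] ℝ} (hf : ‖f‖ ≤ 1) (z : X) : |f z| ≤ ‖z‖ := by
  calc |f z| ≤ ‖f‖ * ‖z‖ := f.le_opNorm z
    _ ≤ 1 * ‖z‖ := mul_le_mul_of_nonneg_right hf (norm_nonneg _)
    _ = ‖z‖ := one_mul _

theorem stmt_7 [FiniteDimensional ℝ X] (hdim : Module.finrank ℝ X = 2)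
    [StrictConvexSpace ℝ X] (hsm : SmoothNormedSpace X)
    (x y : X) (hx : ‖x‖ = 1) (hy : ‖y‖ = 1) (hind : LinearIndependent ℝ ![x, y])
    (hxy : BirkhoffOrth x y)
    (c : X) (r : ℝ) (hr : 0 < r) (α : ℝ) (hα : 0 < α)
    (htouchx : ‖α • x - c‖ = r) (htouchy : ‖α • y - c‖ = r)
    (hsidex : ∀ t : ℝ, r ≤ ‖t • x - c‖) (hsidey : ∀ t : ℝ, r ≤ ‖t • y - c‖) :
    BirkhoffOrth y x := by
  have hx0 : x ≠ 0 := by intro h; rw [h, norm_zero] at hx; norm_num at hx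
  have hy0 : y ≠ 0 := by intro h; rw [h, norm_zero] at hy; norm_num at hy
  obtain ⟨f, hf1, hfx, hfy⟩ := key_functional hdim x y hx0 hy0 hxy
  rw [hx] at hfx
  set v : X := α • y - c with hvdef
  set u : X := α • x - c with hudef
  have hnv : ‖v‖ = r := htouchy
  have hnu : ‖u‖ = r := htouchx
  have hvy : BirkhoffOrth v y := by
    intro t
    have h : v + t • y = (α + t) • y - c := by rw [hvdef, add_smul]; abel
    rw [hnv, h]
    exact hsidey (α + t)
  have hux : BirkhoffOrth u x := by
    intro t
    have h : u + t • x = (α + t) • x - c := by rw [hudef, add_smul]; abel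
    rw [hnu, h]
    exact hsidex (α + t)
  -- coordinates of v in the basis (x, y)
  have hcard : Fintype.card (Fin 2) = Module.finrank ℝ X := by simp [hdim]
  set B : Module.Basis (Fin 2) ℝ X := basisOfLinearIndependentOfCardEqFinrank hind hcard with hBdef
  have hB : ⇑B = ![x, y] := coe_basisOfLinearIndependentOfCardEqFinrank hind hcard
  have hB0 : B 0 = x := by rw [hB]; rfl
  have hB1 : B 1 = y := by rw [hB]; rfl
  set p : ℝ := B.repr v 0 with hpdef
  set q : ℝ := B.repr v 1 with hqdef
  have hvpq : v = p • x + q • y := by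
    conv_lhs => rw [← B.sum_repr v]
    rw [Fin.sum_univ_two, hB0, hB1]
  have hfv : f v = p := by rw [hvpq]; simp [hfx, hfy]
  have hp_le : |p| ≤ r := by rw [← hfv, ← hnv]; exact le_norm_of_le_one hf1 v
  have hp_ge : r ≤ |p| := by
    have h := hvy (-q)
    have he : v + (-q) • y = p • x := by rw [hvpq]; module
    rw [hnv, he, norm_smul, Real.norm_eq_abs, hx, mul_one] at h
    exact h
  have h035 : u = α • x - α • y + v := by rw [hudef, hvdef]; abel
  have hpval : p = -r := by
    rcases (abs_eq hr.le).mp (le_antisymm hp_le hp_ge) with hpr | hpr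
    · exfalso
      have hfu : f u = α + r := by
        rw [h035, map_add, map_sub, map_smul, map_smul, hfx, hfy, hfv, hpr]
        simp only [smul_eq_mul]; ring
      have h := le_norm_of_le_one hf1 u
      rw [hfu, hnu, abs_of_pos (by linarith)] at h
      linarith
    · exact hpr
  -- strict convexity: v = -(r • x)
  have hnvneg : ‖-v‖ = r := by rw [norm_neg, hnv]
  have hnrx : ‖r • x‖ = r := by rw [norm_smul, Real.norm_eq_abs, hx, abs_of_pos hr, mul_one]
  have hveq : v = -(r • x) := by
    have hsum : ‖-v + r • x‖ = ‖-v‖ + ‖r • x‖ := by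
      refine le_antisymm (norm_add_le _ _) ?_
      have hfval : f (-v + r • x) = 2 * r := by
        rw [map_add, map_neg, map_smul, hfx, hfv, hpval]
        simp only [smul_eq_mul]; ring
      have h := le_norm_of_le_one hf1 (-v + r • x)
      rw [hfval, abs_of_pos (by linarith)] at h
      rw [hnvneg, hnrx]
      linarith
    have heq := eq_of_norm_eq_of_norm_add_eq (by rw [hnvneg, hnrx]) hsum
    exact neg_eq_iff_eq_neg.mp heq
  -- hence u = (α - r) • x - α • y
  have huval : u = (α - r) • x - α • y := by
    rw [h035, hveq, sub_smul]; abel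
  -- the supporting functional at u orthogonal to x gives r ≤ α
  have hu0 : u ≠ 0 := by
    intro h; rw [h, norm_zero] at hnu; linarith
  obtain ⟨fu, hfu1, hfuu, hfux⟩ := key_functional hdim u x hu0 hx0 hux
  have hfuy : fu y = -(r / α) := by
    have h : fu u = -α * fu y := by
      rw [huval, map_sub, map_smul, map_smul, hfux]
      simp only [smul_eq_mul]; ring
    rw [hfuu, hnu] at h
    field_simp at h ⊢
    linarith
  have hrα : r ≤ α := by
    have h := le_norm_of_le_one hfu1 y
    rw [hfuy, hy, abs_neg, abs_of_pos (by positivity)] at h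
    calc r = (r / α) * α := by field_simp
      _ ≤ 1 * α := mul_le_mul_of_nonneg_right h hα.le
      _ = α := one_mul α
  -- a norming functional of y
  obtain ⟨g, hg1, hgy⟩ := exists_dual_vector ℝ y (norm_ne_zero_iff.mpr hy0)
  rw [hy] at hgy
  norm_cast at hgy
  set s : ℝ := g x with hsdef
  have hs_le : |s| ≤ 1 := by
    have h := le_norm_of_le_one hg1.le x
    rwa [hx] at h
  have hgu : g u = (α - r) * s - α := by
    rw [huval, map_sub, map_smul, map_smul, hgy]
    simp only [smul_eq_mul]; ring
  have hgu_le : |g u| ≤ r := by rw [← hnu]; exact le_norm_of_le_one hg1.le u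
  have hkey : (α - r) * (1 - s) = 0 := by
    rcases abs_le.mp hgu_le with ⟨h1, h2⟩
    rcases abs_le.mp hs_le with ⟨h3, h4⟩
    rw [hgu] at h1 h2
    have ha0 : 0 ≤ α - r := by linarith
    have e1 : 0 ≤ (α - r) * (1 - s) := mul_nonneg ha0 (by linarith)
    have e2 : (α - r) * (1 - s) ≤ 0 := by
      have hre : (α - r) * (1 - s) = -((α - r) * s - α) - r := by ring
      rw [hre]; linarith
    linarith
  rcases mul_eq_zero.mp hkey with hαr | hs1
  · -- α = r, so u = -α • y, and u ⊣_B x gives the result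
    have hαr' : α = r := by linarith
    have huy : u = -(α • y) := by
      rw [huval, hαr']
      simp
    intro t
    have h := hux (-(α * t))
    have he : u + (-(α * t)) • x = -(α • (y + t • x)) := by
      rw [huy]; module
    rw [hnu, he, norm_neg, norm_smul, Real.norm_eq_abs, abs_of_pos hα, ← hαr'] at h
    rw [hy]
    have h2 : α * 1 ≤ α * ‖y + t • x‖ := by linarith
    exact (mul_le_mul_iff_of_pos_left hα).mp h2
  · -- s = 1 : contradicts strict convexity and linear independence
    exfalso
    have hs1' : s = 1 := by linarith
    have hsum : ‖x + y‖ = ‖x‖ + ‖y‖ := by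
      refine le_antisymm (norm_add_le _ _) ?_
      have hfval : g (x + y) = 2 := by rw [map_add, hgy, ← hsdef, hs1']; ring
      have h := le_norm_of_le_one hg1.le (x + y)
      rw [hfval, abs_of_pos (by norm_num)] at h
      rw [hx, hy]; linarith
    have heq : x = y := eq_of_norm_eq_of_norm_add_eq (by rw [hx, hy]) hsum
    have hinj := hind.injective
    have h01 : (0 : Fin 2) = 1 := by
      apply hinj
      simp [heq]
    simp at h01
end

section
/- Let X be a smooth finite-dimensional real normed space and let x, y, z ∈ X be nonzero vectors with x = y + z and ‖x‖ = ‖y‖ = ‖z‖. Define the symmetric cosine ca(u,v) := (cm(u,v) + cm(v,u))/2 for nonzero u, v. Then ca(x,y) + ca(x,z) + ca(y,−z) = 3/2. -/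
variable {X : Type*} [NormedAddCommGroup X] [NormedSpace ℝ X]

theorem stmt_9 [FiniteDimensional ℝ X] (hsm : SmoothNormedSpace X)
    (F : X → X →L[ℝ] ℝ) (hF : ∀ x : X, x ≠ 0 → IsNormingFunctional x (F x))
    -- the symmetric cosine `ca u v = (cm u v + cm v u)/2`
    (ca : X → X → ℝ)
    (hca : ∀ u v : X, u ≠ 0 → v ≠ 0 → ca u v = (F u v / ‖v‖ + F v u / ‖u‖) / 2)
    (x y z : X) (hx : x ≠ 0) (hy : y ≠ 0) (hz : z ≠ 0)
    (hsum : x = y + z) (hxy : ‖x‖ = ‖y‖) (hxz : ‖x‖ = ‖z‖) :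
    ca x y + ca x z + ca y (-z) = 3 / 2 := by
  have hnz : (-z : X) ≠ 0 := neg_ne_zero.mpr hz
  have r0 : ‖x‖ ≠ 0 := norm_ne_zero_iff.mpr hx
  -- F (-z) = -(F z)
  have hFz : F (-z) = -(F z) := by
    have h1 : IsNormingFunctional (-z) (F (-z)) := hF _ hnz
    have h2 : IsNormingFunctional (-z) (-(F z)) := by
      constructor
      · rw [norm_neg]; exact (hF z hz).1
      · simp [(hF z hz).2]
    obtain ⟨g, _, hu⟩ := hsm (-z) hnz
    rw [hu _ h1, hu _ h2]
  have exx : F x x = ‖x‖ := (hF x hx).2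
  have eyy : F y y = ‖x‖ := by rw [(hF y hy).2, hxy]
  have ezz : F z z = ‖x‖ := by rw [(hF z hz).2, hxz]
  have e1 : F x y + F x z = ‖x‖ := by
    rw [← map_add, ← hsum, exx]
  have e2 : F y x = ‖x‖ + F y z := by conv_lhs => rw [hsum, map_add, eyy]
  have e3 : F z x = ‖x‖ + F z y := by
    conv_lhs => rw [hsum, map_add, ezz]
    rw [add_comm]
  rw [hca x y hx hy, hca x z hx hz, hca y (-z) hy hnz, hFz, ← hxy, ← hxz, norm_neg, ← hxz]
  simp only [map_neg, ContinuousLinearMap.neg_apply]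
  rw [e2, e3]
  field_simp
  have e1' : ((F x) y + (F x) z) * (‖x‖ * ‖x‖) = ‖x‖ * (‖x‖ * ‖x‖) := by rw [e1]
  nlinarith [e1']
end

section
/- Let X be a smooth Minkowski plane. Then X is Radon (Birkhoff orthogonality is symmetric) if and only if cm(x,y)·cm(y,x) ≥ 0 for all nonzero x, y ∈ X, i.e. if and only if f_x(y)·f_y(x) ≥ 0 for all nonzero x, y ∈ X. -/
variable {X : Type*} [NormedAddCommGroup X] [NormedSpace ℝ X]

lemma norming_le (f : X →L[ℝ] ℝ) (hf : ‖f‖ = 1) (w : X) : f w ≤ ‖w‖ := by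
  calc f w ≤ ‖f w‖ := le_abs_self _
  _ ≤ ‖f‖ * ‖w‖ := f.le_opNorm w
  _ = ‖w‖ := by rw [hf, one_mul]

lemma easy_orth {x y : X} (f : X →L[ℝ] ℝ) (hf1 : ‖f‖ = 1) (hfx : f x = ‖x‖)
    (hfy : f y = 0) : BirkhoffOrth x y := by
  intro t
  calc ‖x‖ = f (x + t • y) := by rw [map_add, map_smul, hfy, smul_zero, add_zero, hfx]
  _ ≤ ‖x + t • y‖ := norming_le f hf1 _

lemma birkhoff_ne {u v : X} (hu : u ≠ 0) (hv : v ≠ 0) (h : BirkhoffOrth u v) (s : ℝ) :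
    v + s • u ≠ 0 := by
  intro hz
  have hs : s ≠ 0 := by
    rintro rfl
    rw [zero_smul, add_zero] at hz
    exact hv hz
  have hvu : v = -(s • u) := eq_neg_of_add_eq_zero_left hz
  have h1 := h s⁻¹
  have h2 : u + s⁻¹ • v = 0 := by
    rw [hvu, smul_neg, smul_smul, inv_mul_cancel₀ hs, one_smul]
    exact add_neg_cancel u
  rw [h2, norm_zero] at h1
  exact hu (norm_le_zero_iff.mp h1)

lemma birkhoff_F_nonneg [FiniteDimensional ℝ X] (hsm : SmoothNormedSpace X)
    (F : X → X →L[ℝ] ℝ) (hF : ∀ x : X, x ≠ 0 → IsNormingFunctional x (F x))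
    {x y : X} (hx : x ≠ 0) (h : BirkhoffOrth x y) : 0 ≤ F x y := by
  set a : ℕ → ℝ := fun n => ((n : ℝ) + 1)⁻¹ with ha
  have hapos : ∀ n, 0 < a n := fun n => by positivity
  have hne : ∀ n, x + a n • y ≠ 0 := by
    intro n hzero
    have h1 := h (a n)
    rw [hzero, norm_zero] at h1
    exact hx (norm_le_zero_iff.mp h1)
  set g : ℕ → (X →L[ℝ] ℝ) := fun n => F (x + a n • y) with hg
  have hgnorm : ∀ n, ‖g n‖ = 1 := fun n => (hF _ (hne n)).1
  have hgval : ∀ n, g n (x + a n • y) = ‖x + a n • y‖ := fun n => (hF _ (hne n)).2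
  have hexp : ∀ n, g n (x + a n • y) = g n x + a n * g n y := by
    intro n; rw [map_add, map_smul, smul_eq_mul]
  have hgy : ∀ n, 0 ≤ g n y := by
    intro n
    have e2 : ‖x‖ ≤ g n x + a n * g n y := by
      rw [← hexp, hgval n]; exact h (a n)
    have e3 : g n x ≤ ‖x‖ := norming_le _ (hgnorm n) x
    by_contra hneg
    push_neg at hneg
    have : a n * g n y < 0 := mul_neg_of_pos_of_neg (hapos n) hneg
    linarith
  have hball : ∀ n, g n ∈ Metric.closedBall (0 : X →L[ℝ] ℝ) 1 := by
    intro n; rw [Metric.mem_closedBall, dist_zero_right, hgnorm n]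
  obtain ⟨G, hGmem, φ, hφ, hconv⟩ :=
    (isCompact_closedBall (0 : X →L[ℝ] ℝ) 1).tendsto_subseq hball
  have haten : Filter.Tendsto (fun n => a (φ n)) Filter.atTop (nhds 0) := by
    have h0 : Filter.Tendsto a Filter.atTop (nhds 0) := by
      simpa [ha, one_div] using (tendsto_one_div_add_atTop_nhds_zero_nat : Filter.Tendsto (fun n : ℕ => 1 / ((n : ℝ) + 1)) Filter.atTop (nhds 0))
    exact h0.comp hφ.tendsto_atTop
  have happly : ∀ w : X, Filter.Tendsto (fun n => g (φ n) w) Filter.atTop (nhds (G w)) := by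
    intro w
    exact ((ContinuousLinearMap.apply ℝ ℝ w).continuous.tendsto G).comp hconv
  have hGy : 0 ≤ G y := ge_of_tendsto' (happly y) (fun n => hgy (φ n))
  have hGx : G x = ‖x‖ := by
    have h1 : Filter.Tendsto (fun n => ‖x + a (φ n) • y‖) Filter.atTop (nhds ‖x‖) := by
      have hc : Continuous fun t : ℝ => ‖x + t • y‖ := by continuity
      have := (hc.tendsto 0).comp haten
      simpa [Function.comp_def] using this
    have h2 : Filter.Tendsto (fun n => a (φ n) * g (φ n) y) Filter.atTop (nhds 0) := by
      refine squeeze_zero_norm (a := fun n => a (φ n) * ‖y‖) (fun n => ?_) ?_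
      · rw [norm_mul, Real.norm_eq_abs, Real.norm_eq_abs, abs_of_pos (hapos (φ n))]
        have : |g (φ n) y| ≤ ‖y‖ := by
          calc |g (φ n) y| = ‖g (φ n) y‖ := rfl
          _ ≤ ‖g (φ n)‖ * ‖y‖ := (g (φ n)).le_opNorm y
          _ = ‖y‖ := by rw [hgnorm, one_mul]
        exact mul_le_mul_of_nonneg_left this (hapos (φ n)).le
      · simpa using haten.mul_const ‖y‖
    have h3 : Filter.Tendsto (fun n => g (φ n) x) Filter.atTop (nhds ‖x‖) := by
      have h4 := h1.sub h2
      rw [sub_zero] at h4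
      apply h4.congr
      intro n
      have := hexp (φ n)
      have := hgval (φ n)
      linarith
    exact tendsto_nhds_unique (happly x) h3
  have hGnorm : ‖G‖ = 1 := by
    have hle : ‖G‖ ≤ 1 := by
      have := hGmem; rwa [Metric.mem_closedBall, dist_zero_right] at this
    have hx0 : 0 < ‖x‖ := norm_pos_iff.mpr hx
    have hge : ‖x‖ ≤ ‖G‖ * ‖x‖ := by
      calc ‖x‖ = G x := hGx.symm
      _ ≤ ‖G x‖ := le_abs_self _
      _ ≤ ‖G‖ * ‖x‖ := G.le_opNorm x
    nlinarith
  obtain ⟨f, hfP, hu⟩ := hsm x hx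
  have hFG : F x = G := (hu (F x) (hF x hx)).trans (hu G ⟨hGnorm, hGx⟩).symm
  rw [hFG]; exact hGy

lemma birkhoff_F_zero [FiniteDimensional ℝ X] (hsm : SmoothNormedSpace X)
    (F : X → X →L[ℝ] ℝ) (hF : ∀ x : X, x ≠ 0 → IsNormingFunctional x (F x))
    {x y : X} (hx : x ≠ 0) (h : BirkhoffOrth x y) : F x y = 0 := by
  have h1 := birkhoff_F_nonneg hsm F hF hx h
  have hneg : BirkhoffOrth x (-y) := by
    intro t
    simpa [smul_neg, neg_smul] using h (-t)
  have h2 := birkhoff_F_nonneg hsm F hF hx hneg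
  rw [map_neg] at h2
  linarith

theorem stmt_12 [FiniteDimensional ℝ X] (hdim : Module.finrank ℝ X = 2)
    (hsm : SmoothNormedSpace X)
    (F : X → X →L[ℝ] ℝ) (hF : ∀ x : X, x ≠ 0 → IsNormingFunctional x (F x)) :
    (∀ u v : X, BirkhoffOrth u v → BirkhoffOrth v u) ↔
    (∀ x y : X, x ≠ 0 → y ≠ 0 → 0 ≤ (F x y / ‖y‖) * (F y x / ‖x‖)) := by
  constructor
  · intro hRadon x y hx hy
    have hxnorm : (0:ℝ) < ‖x‖ := norm_pos_iff.mpr hx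
    have hynorm : (0:ℝ) < ‖y‖ := norm_pos_iff.mpr hy
    have hFxx : F x x = ‖x‖ := (hF x hx).2
    have hFx1 : ‖F x‖ = 1 := (hF x hx).1
    have hFyy : F y y = ‖y‖ := (hF y hy).2
    set a : ℝ := F x y / ‖x‖ with ha
    have e1 : F x y = a * ‖x‖ := by rw [ha]; field_simp
    have key : 0 ≤ F x y * F y x := by
      by_cases hz : y - a • x = 0
      · -- y = a • x
        have hy' : y = a • x := by rwa [sub_eq_zero] at hz
        have hane : a ≠ 0 := by
          rintro h0; rw [h0, zero_smul] at hy'; exact hy hy'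
        have hFyx : a * F y x = ‖y‖ := by
          have h := map_smul (F y) a x
          rw [← hy', smul_eq_mul] at h
          rw [← h]
          exact hFyy
        calc (0:ℝ) ≤ ‖x‖ * ‖y‖ := by positivity
        _ = ‖x‖ * (a * F y x) := by rw [hFyx]
        _ = (a * ‖x‖) * F y x := by ring
        _ = F x y * F y x := by rw [e1]
      · have hFxz : F x (y - a • x) = 0 := by
          rw [map_sub, map_smul, smul_eq_mul, hFxx, e1]; ring
        have horth : BirkhoffOrth x (y - a • x) := easy_orth (F x) hFx1 hFxx hFxz
        have horth' := hRadon x (y - a • x) horth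
        have h1 := horth' a
        have h2 : y - a • x + a • x = y := by abel
        rw [h2] at h1
        have h3 : F y (y - a • x) ≤ ‖y - a • x‖ := norming_le (F y) (hF y hy).1 _
        have h4 : F y (y - a • x) = ‖y‖ - a * F y x := by
          rw [map_sub, map_smul, smul_eq_mul, hFyy]
        have h5 : 0 ≤ a * F y x := by linarith
        have h6 : 0 ≤ ‖x‖ * (a * F y x) := mul_nonneg hxnorm.le h5
        calc (0:ℝ) ≤ ‖x‖ * (a * F y x) := h6
        _ = (a * ‖x‖) * F y x := by ring
        _ = F x y * F y x := by rw [e1]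
    rw [div_mul_div_comm]
    exact div_nonneg key (by positivity)
  · intro hsign u v huv
    by_cases hu : u = 0
    · subst hu
      intro t
      simp
    by_cases hv : v = 0
    · subst hv
      intro t
      simp
    have hFuv : F u v = 0 := birkhoff_F_zero hsm F hF hu huv
    have hFuu : F u u = ‖u‖ := (hF u hu).2
    have hune : ∀ s : ℝ, v + s • u ≠ 0 := birkhoff_ne hu hv huv
    have hu0 : (0:ℝ) < ‖u‖ := norm_pos_iff.mpr hu
    intro t
    have key : ∀ δ : ℝ, 0 < δ → δ < 1 → ‖v‖ - |t * δ| * ‖u‖ ≤ ‖v + t • u‖ := by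
      intro δ hδ0 hδ1
      set s : ℝ := t * δ with hs
      set xs : X := v + s • u with hxsdef
      have hxs : xs ≠ 0 := hune s
      have hxs0 : (0:ℝ) < ‖xs‖ := norm_pos_iff.mpr hxs
      have hsign' := hsign xs u hxs hu
      have hFuxs : F u xs = s * ‖u‖ := by
        rw [hxsdef, map_add, map_smul, smul_eq_mul, hFuv, hFuu, zero_add]
      -- 0 ≤ F xs u * s
      have h6 : 0 ≤ (F xs u * s) / ‖xs‖ := by
        have heq : F xs u / ‖u‖ * (F u xs / ‖xs‖) = (F xs u * s) / ‖xs‖ := by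
          rw [hFuxs]; field_simp
        rw [heq] at hsign'
        exact hsign'
      have h7 : 0 ≤ F xs u * s := by
        have := mul_nonneg h6 hxs0.le
        rwa [div_mul_cancel₀ _ (ne_of_gt hxs0)] at this
      rw [hs] at h7
      have h8 : 0 ≤ F xs u * t := by
        rcases le_or_gt 0 (F xs u * t) with h | h
        · exact h
        · exfalso
          have h2 := mul_neg_of_neg_of_pos h hδ0
          nlinarith
      have h11 : 0 ≤ (t - s) * F xs u := by
        rw [hs]
        nlinarith [mul_nonneg h8 (by linarith : (0:ℝ) ≤ 1 - δ)]
      have h9 : F xs (v + t • u) = ‖xs‖ + (t - s) * F xs u := by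
        have hvt : v + t • u = xs + (t - s) • u := by
          rw [hxsdef, add_assoc, ← add_smul]
          ring_nf
        rw [hvt, map_add, map_smul, smul_eq_mul, (hF xs hxs).2]
      have h10 : ‖xs‖ + (t - s) * F xs u ≤ ‖v + t • u‖ := by
        rw [← h9]; exact norming_le (F xs) (hF xs hxs).1 _
      have h12 : ‖v‖ ≤ ‖xs‖ + |s| * ‖u‖ := by
        have e1 : v = xs + (-(s • u)) := by rw [hxsdef]; abel
        calc ‖v‖ = ‖xs + (-(s • u))‖ := by rw [← e1]
        _ ≤ ‖xs‖ + ‖-(s • u)‖ := norm_add_le _ _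
        _ = ‖xs‖ + |s| * ‖u‖ := by rw [norm_neg, norm_smul, Real.norm_eq_abs]
      linarith
    by_contra hlt
    push_neg at hlt
    set ε : ℝ := ‖v‖ - ‖v + t • u‖ with hε
    have hεpos : 0 < ε := by simp only [hε]; linarith
    set c : ℝ := |t| * ‖u‖ with hc
    have hc0 : (0:ℝ) ≤ c := by positivity
    set δ : ℝ := min (1/2) (ε / (2 * (c + 1))) with hδ
    have hδ0 : 0 < δ := lt_min (by norm_num) (by positivity)
    have hδ1 : δ < 1 := lt_of_le_of_lt (min_le_left _ _) (by norm_num)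
    have h13 := key δ hδ0 hδ1
    have h14 : |t * δ| * ‖u‖ = δ * c := by
      rw [abs_mul, abs_of_pos hδ0, hc]; ring
    have hd : δ ≤ ε / (2 * (c + 1)) := min_le_right _ _
    have h15 : δ * c < ε := by
      have h1 : δ * (c + 1) ≤ (ε / (2 * (c + 1))) * (c + 1) :=
        mul_le_mul_of_nonneg_right hd (by positivity)
      have h2 : (ε / (2 * (c + 1))) * (c + 1) = ε / 2 := by
        field_simp
      nlinarith
    rw [h14] at h13
    linarith
end

section
/- Let X be a smooth Minkowski plane. Then X is Radon (Birkhoff orthogonality is symmetric) if and only if the function g(x,y) := sgn( lim_{t→0} (‖x + t·y‖ − ‖x‖)/t ) is symmetric on pairs of nonzero vectors, i.e. g(x,y) = g(y,x) for all nonzero x, y ∈ X, where sgn denotes the usual sign function. -/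
open scoped Topology

variable {X : Type*} [NormedAddCommGroup X] [NormedSpace ℝ X]

private lemma conv_aux (x y : X) : ConvexOn ℝ Set.univ (fun t : ℝ => ‖x + t • y‖) := by
  refine ⟨convex_univ, fun p _ q _ a b ha hb hab => ?_⟩
  have hb' : b = 1 - a := by linarith
  subst hb'
  simp only [smul_eq_mul]
  have h : x + (a * p + (1 - a) * q) • y
      = a • (x + p • y) + (1 - a) • (x + q • y) := by module
  rw [h]
  refine (norm_add_le _ _).trans ?_
  rw [norm_smul, norm_smul, Real.norm_eq_abs, Real.norm_eq_abs,
    abs_of_nonneg ha, abs_of_nonneg hb]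

private lemma slope_mono (x y : X) {s t : ℝ} (hs : s ≠ 0) (ht : t ≠ 0) (hst : s ≤ t) :
    (‖x + s • y‖ - ‖x‖) / s ≤ (‖x + t • y‖ - ‖x‖) / t := by
  have h := (conv_aux x y).secant_mono (a := 0) (Set.mem_univ 0) (Set.mem_univ s)
    (Set.mem_univ t) hs ht hst
  simpa using h

private lemma tendsto_right (x y : X) {L : ℝ}
    (hL : Filter.Tendsto (fun t : ℝ => (‖x + t • y‖ - ‖x‖) / t) (𝓝[≠] (0 : ℝ)) (𝓝 L)) :
    Filter.Tendsto (fun t : ℝ => (‖x + t • y‖ - ‖x‖) / t) (𝓝[>] (0 : ℝ)) (𝓝 L) :=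
  hL.mono_left (nhdsWithin_mono 0 (fun s hs => by simpa using ne_of_gt hs))

private lemma tendsto_left (x y : X) {L : ℝ}
    (hL : Filter.Tendsto (fun t : ℝ => (‖x + t • y‖ - ‖x‖) / t) (𝓝[≠] (0 : ℝ)) (𝓝 L)) :
    Filter.Tendsto (fun t : ℝ => (‖x + t • y‖ - ‖x‖) / t) (𝓝[<] (0 : ℝ)) (𝓝 L) :=
  hL.mono_left (nhdsWithin_mono 0 (fun s hs => by simpa using ne_of_lt hs))

private lemma lim_le (x y : X) {L t : ℝ}
    (hL : Filter.Tendsto (fun t : ℝ => (‖x + t • y‖ - ‖x‖) / t) (𝓝[≠] (0 : ℝ)) (𝓝 L))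
    (ht : 0 < t) : L ≤ (‖x + t • y‖ - ‖x‖) / t := by
  refine le_of_tendsto (tendsto_right x y hL) ?_
  filter_upwards [Ioo_mem_nhdsGT_of_mem (⟨le_refl (0:ℝ), ht⟩ : (0:ℝ) ∈ Set.Ico 0 t)]
    with s hs
  exact slope_mono x y (ne_of_gt hs.1) (ne_of_gt ht) hs.2.le

private lemma le_lim (x y : X) {L t : ℝ}
    (hL : Filter.Tendsto (fun t : ℝ => (‖x + t • y‖ - ‖x‖) / t) (𝓝[≠] (0 : ℝ)) (𝓝 L))
    (ht : t < 0) : (‖x + t • y‖ - ‖x‖) / t ≤ L := by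
  refine ge_of_tendsto (tendsto_left x y hL) ?_
  filter_upwards [Ioo_mem_nhdsLT_of_mem (⟨ht, le_refl (0:ℝ)⟩ : (0:ℝ) ∈ Set.Ioc t 0)]
    with s hs
  exact slope_mono x y (ne_of_lt ht) (ne_of_lt hs.2) hs.1.le

private lemma lim_nonneg (x y : X) {L : ℝ}
    (hL : Filter.Tendsto (fun t : ℝ => (‖x + t • y‖ - ‖x‖) / t) (𝓝[≠] (0 : ℝ)) (𝓝 L))
    (h : ∀ t : ℝ, 0 < t → 0 ≤ (‖x + t • y‖ - ‖x‖) / t) : 0 ≤ L := by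
  refine ge_of_tendsto (tendsto_right x y hL) ?_
  filter_upwards [self_mem_nhdsWithin] with s hs
  exact h s hs

private lemma lim_nonpos (x y : X) {L : ℝ}
    (hL : Filter.Tendsto (fun t : ℝ => (‖x + t • y‖ - ‖x‖) / t) (𝓝[≠] (0 : ℝ)) (𝓝 L))
    (h : ∀ t : ℝ, t < 0 → (‖x + t • y‖ - ‖x‖) / t ≤ 0) : L ≤ 0 := by
  refine le_of_tendsto (tendsto_left x y hL) ?_
  filter_upwards [self_mem_nhdsWithin] with s hs
  exact h s hs

private lemma f_lim (x y : X) (f : X →L[ℝ] ℝ) (hf1 : ‖f‖ = 1) (hfx : f x = ‖x‖) {L : ℝ}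
    (hL : Filter.Tendsto (fun t : ℝ => (‖x + t • y‖ - ‖x‖) / t) (𝓝[≠] (0 : ℝ)) (𝓝 L)) :
    L = f y := by
  have hfw : ∀ w : X, f w ≤ ‖w‖ := fun w =>
    (le_abs_self _).trans (by simpa [hf1] using f.le_opNorm w)
  have hval : ∀ t : ℝ, ‖x‖ + t * f y ≤ ‖x + t • y‖ := by
    intro t
    have := hfw (x + t • y)
    rw [map_add, map_smul, hfx] at this
    simpa [smul_eq_mul] using this
  have h1 : f y ≤ L := by
    refine ge_of_tendsto (tendsto_right x y hL) ?_
    filter_upwards [self_mem_nhdsWithin] with s hs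
    rw [le_div_iff₀ hs]
    have := hval s; linarith [mul_comm s (f y)]
  have h2 : L ≤ f y := by
    refine le_of_tendsto (tendsto_left x y hL) ?_
    filter_upwards [self_mem_nhdsWithin] with s (hs : s < 0)
    rw [div_le_iff_of_neg hs]
    have := hval s; linarith [mul_comm s (f y)]
  linarith

private lemma cmm {c : ℝ → ℝ} (hc : ConvexOn ℝ Set.univ c) (hmin : ∀ s, c 0 ≤ c s)
    {a b : ℝ} (ha : 0 ≤ a) (hab : a ≤ b) : c a ≤ c b := by
  rcases ha.eq_or_lt with h | ha'
  · rw [← h]; exact hmin b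
  rcases hab.eq_or_lt with h | hab'
  · rw [h]
  have hb : (0:ℝ) < b := ha'.trans hab'
  have h := hc.secant_mono (a := 0) (Set.mem_univ 0) (Set.mem_univ a) (Set.mem_univ b)
    (ne_of_gt ha') (ne_of_gt hb) hab
  simp only [sub_zero] at h
  rw [div_le_div_iff₀ ha' hb] at h
  nlinarith [hmin b]

private lemma conv_neg {c : ℝ → ℝ} (hc : ConvexOn ℝ Set.univ c) :
    ConvexOn ℝ Set.univ (fun s => c (-s)) := by
  refine ⟨convex_univ, fun p _ q _ a b ha hb hab => ?_⟩
  have h : -(a • p + b • q) = a • (-p) + b • (-q) := by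
    simp only [smul_eq_mul]; ring
  simp only [h]
  exact hc.2 (Set.mem_univ _) (Set.mem_univ _) ha hb hab

private lemma cmm' {c : ℝ → ℝ} (hc : ConvexOn ℝ Set.univ c) (hmin : ∀ s, c 0 ≤ c s)
    {a b : ℝ} (hb : b ≤ 0) (hab : a ≤ b) : c b ≤ c a := by
  have h := cmm (conv_neg hc) (fun s => by simpa using hmin (-s))
    (a := -b) (b := -a) (by linarith) (by linarith)
  simpa using h


private lemma key_pos (hR : ∀ u v : X, BirkhoffOrth u v → BirkhoffOrth v u)
    (x z y : X) (f : X →L[ℝ] ℝ) (hx : x ≠ 0) (hf1 : ‖f‖ = 1) (hfx : f x = ‖x‖)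
    (hfz : f z = 0) {α β : ℝ} (hyeq : y = α • x + β • z) (hα : 0 < α) {L M : ℝ}
    (hL : Filter.Tendsto (fun t : ℝ => (‖x + t • y‖ - ‖x‖) / t) (𝓝[≠] (0 : ℝ)) (𝓝 L))
    (hM : Filter.Tendsto (fun t : ℝ => (‖y + t • x‖ - ‖y‖) / t) (𝓝[≠] (0 : ℝ)) (𝓝 M)) :
    0 < L ∧ 0 < M := by
  have hfw : ∀ w : X, f w ≤ ‖w‖ := fun w =>
    (le_abs_self _).trans (by simpa [hf1] using f.le_opNorm w)
  have hfy : f y = α * ‖x‖ := by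
    rw [hyeq, map_add, map_smul, map_smul, hfx, hfz]
    simp
  have hLval : L = α * ‖x‖ := by rw [f_lim x y f hf1 hfx hL, hfy]
  have hLpos : 0 < L := by
    rw [hLval]; exact mul_pos hα (norm_pos_iff.2 hx)
  have hxz : BirkhoffOrth x z := by
    intro t
    have h := hfw (x + t • z)
    rw [map_add, map_smul, hfx, hfz] at h
    simpa using h
  have hzx : BirkhoffOrth z x := hR x z hxz
  -- the convex function s ↦ ‖β•z + s•x‖ has a minimum at 0
  have hmin : ∀ s : ℝ, ‖β • z + (0:ℝ) • x‖ ≤ ‖β • z + s • x‖ := by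
    intro s
    rcases eq_or_ne β 0 with rfl | hβ
    · simp
    · have h := hzx (s / β)
      calc ‖β • z + (0:ℝ) • x‖ = |β| * ‖z‖ := by simp [norm_smul]
        _ ≤ |β| * ‖z + (s / β) • x‖ := by
            exact mul_le_mul_of_nonneg_left h (abs_nonneg β)
        _ = ‖β • (z + (s / β) • x)‖ := by rw [norm_smul]; simp
        _ = ‖β • z + s • x‖ := by
            rw [smul_add, smul_smul, mul_div_cancel₀ _ hβ]
  have hconv := conv_aux (β • z) x
  have hrw : ∀ t : ℝ, y + t • x = β • z + (α + t) • x := by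
    intro t; rw [hyeq]; module
  have hynorm : ‖y‖ = ‖β • z + α • x‖ := by
    rw [hyeq]; congr 1; module
  have hMnonneg : 0 ≤ M := by
    refine lim_nonneg y x hM ?_
    intro t ht
    apply div_nonneg _ ht.le
    rw [hrw t, hynorm, sub_nonneg]
    exact cmm hconv hmin hα.le (by linarith)
  have hMne : M ≠ 0 := by
    intro hM0
    have hyx : BirkhoffOrth y x := by
      intro t
      rcases lt_trichotomy t 0 with ht | rfl | ht
      · have h := le_lim y x hM ht
        rw [hM0] at h
        have h2 : 0 ≤ (‖y + t • x‖ - ‖y‖) / t * t := by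
          have := mul_nonneg (neg_nonneg.2 h) (neg_nonneg.2 ht.le)
          simpa [neg_mul_neg] using this
        rw [div_mul_cancel₀ _ (ne_of_lt ht)] at h2
        linarith
      · simp
      · have h := lim_le y x hM ht
        rw [hM0] at h
        have h2 : 0 ≤ (‖y + t • x‖ - ‖y‖) / t * t := mul_nonneg h ht.le
        rw [div_mul_cancel₀ _ (ne_of_gt ht)] at h2
        linarith
    have hxy : BirkhoffOrth x y := hR y x hyx
    have hL0 : L ≤ 0 := by
      refine lim_nonpos x y hL ?_
      intro t ht
      exact div_nonpos_of_nonneg_of_nonpos (sub_nonneg.2 (hxy t)) ht.le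
    linarith
  exact ⟨hLpos, lt_of_le_of_ne hMnonneg (Ne.symm hMne)⟩

private lemma key_zero (hR : ∀ u v : X, BirkhoffOrth u v → BirkhoffOrth v u)
    (x z y : X) (f : X →L[ℝ] ℝ) (hf1 : ‖f‖ = 1) (hfx : f x = ‖x‖)
    (hfz : f z = 0) {β : ℝ} (hyeq : y = β • z) {L M : ℝ}
    (hL : Filter.Tendsto (fun t : ℝ => (‖x + t • y‖ - ‖x‖) / t) (𝓝[≠] (0 : ℝ)) (𝓝 L))
    (hM : Filter.Tendsto (fun t : ℝ => (‖y + t • x‖ - ‖y‖) / t) (𝓝[≠] (0 : ℝ)) (𝓝 M)) :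
    L = 0 ∧ M = 0 := by
  have hfw : ∀ w : X, f w ≤ ‖w‖ := fun w =>
    (le_abs_self _).trans (by simpa [hf1] using f.le_opNorm w)
  have hfy : f y = 0 := by rw [hyeq, map_smul, hfz]; simp
  have hLval : L = 0 := by rw [f_lim x y f hf1 hfx hL, hfy]
  have hxz : BirkhoffOrth x z := by
    intro t
    have h := hfw (x + t • z)
    rw [map_add, map_smul, hfx, hfz] at h
    simpa using h
  have hzx : BirkhoffOrth z x := hR x z hxz
  have hmin : ∀ s : ℝ, ‖y‖ ≤ ‖y + s • x‖ := by
    intro s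
    rcases eq_or_ne β 0 with rfl | hβ
    · simp [hyeq]
    · have h := hzx (s / β)
      rw [hyeq]
      calc ‖β • z‖ = |β| * ‖z‖ := by simp [norm_smul]
        _ ≤ |β| * ‖z + (s / β) • x‖ := mul_le_mul_of_nonneg_left h (abs_nonneg β)
        _ = ‖β • (z + (s / β) • x)‖ := by rw [norm_smul]; simp
        _ = ‖β • z + s • x‖ := by rw [smul_add, smul_smul, mul_div_cancel₀ _ hβ]
  have hM0 : M = 0 := by
    have h1 : 0 ≤ M := lim_nonneg y x hM fun t ht =>
      div_nonneg (sub_nonneg.2 (hmin t)) ht.le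
    have h2 : M ≤ 0 := lim_nonpos y x hM fun t ht =>
      div_nonpos_of_nonneg_of_nonpos (sub_nonneg.2 (hmin t)) ht.le
    linarith
  exact ⟨hLval, hM0⟩

private lemma neg_tendsto_punctured :
    Filter.Tendsto (fun t : ℝ => -t) (𝓝[≠] (0 : ℝ)) (𝓝[≠] (0 : ℝ)) := by
  apply tendsto_nhdsWithin_of_tendsto_nhds_of_eventually_within
  · simpa using (continuous_neg.tendsto (0:ℝ)).mono_left nhdsWithin_le_nhds
  · filter_upwards [self_mem_nhdsWithin] with s hs
    simpa using hs

private lemma neg_tendsto_left_right :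
    Filter.Tendsto (fun t : ℝ => -t) (𝓝[<] (0 : ℝ)) (𝓝[>] (0 : ℝ)) := by
  apply tendsto_nhdsWithin_of_tendsto_nhds_of_eventually_within
  · simpa using (continuous_neg.tendsto (0:ℝ)).mono_left nhdsWithin_le_nhds
  · filter_upwards [self_mem_nhdsWithin] with s (hs : s < 0)
    simpa using hs

private lemma smooth_exists_lim [FiniteDimensional ℝ X] (hsm : SmoothNormedSpace X)
    (x : X) (hx : x ≠ 0) (v : X) (hv : v ≠ 0) :
    ∃ L, Filter.Tendsto (fun t : ℝ => (‖x + t • v‖ - ‖x‖) / t) (𝓝[≠] (0 : ℝ)) (𝓝 L) := by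
  set p : X → ℝ := fun w => sInf ((fun t => (‖x + t • w‖ - ‖x‖) / t) '' Set.Ioi 0) with hp
  have hlb : ∀ w : X, ∀ t ∈ Set.Ioi (0:ℝ), -‖w‖ ≤ (‖x + t • w‖ - ‖x‖) / t := by
    intro w t ht
    rw [Set.mem_Ioi] at ht
    rw [le_div_iff₀ ht]
    have h1 : ‖x‖ ≤ ‖x + t • w‖ + ‖t • w‖ := by
      calc ‖x‖ = ‖(x + t • w) + (-(t • w))‖ := by congr 1; module
        _ ≤ ‖x + t • w‖ + ‖-(t • w)‖ := norm_add_le _ _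
        _ = ‖x + t • w‖ + ‖t • w‖ := by rw [norm_neg]
    have h2 : ‖t • w‖ = t * ‖w‖ := by
      rw [norm_smul, Real.norm_eq_abs, abs_of_pos ht]
    nlinarith
  have hbdd : ∀ w : X, BddBelow ((fun t => (‖x + t • w‖ - ‖x‖) / t) '' Set.Ioi 0) := by
    intro w
    refine ⟨-‖w‖, ?_⟩
    rintro a ⟨t, ht, rfl⟩
    exact hlb w t ht
  have hne : ∀ w : X, ((fun t => (‖x + t • w‖ - ‖x‖) / t) '' Set.Ioi 0).Nonempty :=
    fun w => ⟨_, Set.mem_image_of_mem _ (Set.mem_Ioi.2 one_pos)⟩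
  have hple : ∀ w : X, ∀ t : ℝ, 0 < t → p w ≤ (‖x + t • w‖ - ‖x‖) / t :=
    fun w t ht => csInf_le (hbdd w) (Set.mem_image_of_mem _ (Set.mem_Ioi.2 ht))
  have hlep : ∀ (w : X) (b : ℝ), (∀ t : ℝ, 0 < t → b ≤ (‖x + t • w‖ - ‖x‖) / t) → b ≤ p w := by
    intro w b h
    refine le_csInf (hne w) ?_
    rintro a ⟨t, ht, rfl⟩
    exact h t ht
  have hpnorm : ∀ w : X, p w ≤ ‖w‖ := by
    intro w
    refine (hple w 1 one_pos).trans ?_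
    simp only [one_smul, div_one]
    have := norm_add_le x w
    linarith
  have hp0 : p 0 = 0 := by
    refine le_antisymm ?_ (hlep 0 0 fun t ht => by simp)
    have := hple 0 1 one_pos
    simpa using this
  have hphom : ∀ c : ℝ, 0 < c → ∀ w : X, p (c • w) = c * p w := by
    intro c hc w
    apply le_antisymm
    · have h : p (c • w) / c ≤ p w := by
        refine hlep w _ ?_
        intro t ht
        have h2 := hple (c • w) (t / c) (div_pos ht hc)
        rw [smul_smul, div_mul_cancel₀ _ (ne_of_gt hc)] at h2
        rw [div_div_eq_mul_div] at h2
        rw [div_le_div_iff₀ hc ht]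
        have h3 := (le_div_iff₀ ht).1 h2
        linarith
      calc p (c • w) = c * (p (c • w) / c) := by field_simp
        _ ≤ c * p w := mul_le_mul_of_nonneg_left h hc.le
    · refine hlep (c • w) _ ?_
      intro t ht
      have h2 := hple w (c * t) (mul_pos hc ht)
      have h3 : t • (c • w) = (c * t) • w := by rw [smul_smul, mul_comm]
      rw [h3]
      calc c * p w ≤ c * ((‖x + (c * t) • w‖ - ‖x‖) / (c * t)) :=
            mul_le_mul_of_nonneg_left h2 hc.le
        _ = (‖x + (c * t) • w‖ - ‖x‖) / t := by
            field_simp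
  have hpadd : ∀ w1 w2 : X, p (w1 + w2) ≤ p w1 + p w2 := by
    intro w1 w2
    refine le_of_forall_pos_le_add ?_
    intro ε hε
    obtain ⟨a1, ha1m, ha1⟩ := exists_lt_of_csInf_lt (hne w1)
      (lt_add_of_pos_right (p w1) (by linarith : (0:ℝ) < ε / 4))
    obtain ⟨s1, hs1, rfl⟩ := ha1m
    obtain ⟨a2, ha2m, ha2⟩ := exists_lt_of_csInf_lt (hne w2)
      (lt_add_of_pos_right (p w2) (by linarith : (0:ℝ) < ε / 4))
    obtain ⟨s2, hs2, rfl⟩ := ha2m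
    rw [Set.mem_Ioi] at hs1 hs2
    set s := min s1 s2 with hsdef
    have hs : 0 < s := lt_min hs1 hs2
    have h1 : (‖x + s • w1‖ - ‖x‖) / s ≤ (‖x + s1 • w1‖ - ‖x‖) / s1 :=
      slope_mono x w1 (ne_of_gt hs) (ne_of_gt hs1) (min_le_left _ _)
    have h2 : (‖x + s • w2‖ - ‖x‖) / s ≤ (‖x + s2 • w2‖ - ‖x‖) / s2 :=
      slope_mono x w2 (ne_of_gt hs) (ne_of_gt hs2) (min_le_right _ _)
    have h3 := hple (w1 + w2) (s / 2) (by linarith)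
    have hnorm : ‖x + (s / 2) • (w1 + w2)‖ ≤ (‖x + s • w1‖ + ‖x + s • w2‖) / 2 := by
      have heq : x + (s / 2) • (w1 + w2) = (1 / 2 : ℝ) • ((x + s • w1) + (x + s • w2)) := by
        module
      rw [heq, norm_smul]
      have := norm_add_le (x + s • w1) (x + s • w2)
      rw [Real.norm_eq_abs]
      rw [abs_of_pos (by norm_num : (0:ℝ) < 1/2)]
      linarith
    have h4 : (‖x + (s / 2) • (w1 + w2)‖ - ‖x‖) / (s / 2)
        ≤ (‖x + s • w1‖ - ‖x‖) / s + (‖x + s • w2‖ - ‖x‖) / s := by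
      rw [← add_div, div_le_div_iff₀ (by linarith) hs]
      nlinarith
    linarith
  -- the sublinear functional machine
  have hHB : ∀ r : ℝ, (∀ c : ℝ, c * r ≤ p (c • v)) →
      ∃ G : X →L[ℝ] ℝ, IsNormingFunctional x G ∧ G v = r := by
    intro r hr
    have hdomle : ∀ u : (LinearPMap.mkSpanSingleton (K := ℝ) (L := ℝ) (σ := RingHom.id ℝ) v r hv).domain,
        (LinearPMap.mkSpanSingleton (K := ℝ) (L := ℝ) (σ := RingHom.id ℝ) v r hv) u ≤ p u := by
      rintro ⟨u, hu⟩
      have hu' := hu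
      rw [LinearPMap.domain_mkSpanSingleton, Submodule.mem_span_singleton] at hu'
      obtain ⟨c, hc⟩ := hu'
      have happ : (LinearPMap.mkSpanSingleton (K := ℝ) (L := ℝ) (σ := RingHom.id ℝ) v r hv) ⟨u, hu⟩ = c • r := by
        have heq2 : (⟨u, hu⟩ : (LinearPMap.mkSpanSingleton (K := ℝ) (L := ℝ) (σ := RingHom.id ℝ) v r hv).domain)
            = ⟨c • v, by rw [hc]; exact hu⟩ := by
          apply Subtype.ext; exact hc.symm
        rw [heq2]
        exact LinearPMap.mkSpanSingleton'_apply _ _ _ c _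
      rw [happ]
      show c • r ≤ p u
      rw [hc.symm]
      simpa using hr c
    obtain ⟨g, hg1, hg2⟩ := exists_extension_of_le_sublinear
      (LinearPMap.mkSpanSingleton v r hv) p (fun c hc w => hphom c hc w) hpadd hdomle
    · have hgle : ∀ w, g w ≤ ‖w‖ := fun w => (hg2 w).trans (hpnorm w)
      have habs : ∀ w, |g w| ≤ ‖w‖ := by
        intro w
        rw [abs_le]
        constructor
        · have := hgle (-w); rw [map_neg] at this; simpa using (by linarith : -‖-w‖ ≤ g w)
        · exact hgle w
      have hgx : g x = ‖x‖ := by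
        have hpnx : p (-x) ≤ -‖x‖ := by
          have := hple (-x) 1 one_pos
          simpa using this
        have h2 : -(g x) ≤ -‖x‖ := by
          have := (hg2 (-x)).trans hpnx
          rwa [map_neg] at this
        have h1 : g x ≤ ‖x‖ := hgle x
        linarith
      let G := LinearMap.toContinuousLinearMap g
      have hGapp : ∀ w, G w = g w := fun w => rfl
      have hGnorm : ‖G‖ = 1 := by
        apply le_antisymm
        · refine ContinuousLinearMap.opNorm_le_bound _ zero_le_one ?_
          intro w
          rw [one_mul, hGapp, Real.norm_eq_abs]
          exact habs w
        · have h1 : ‖x‖ ≤ ‖G‖ * ‖x‖ := by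
            calc ‖x‖ = ‖G x‖ := by rw [hGapp, hgx, Real.norm_eq_abs, abs_of_nonneg (norm_nonneg x)]
              _ ≤ ‖G‖ * ‖x‖ := G.le_opNorm x
          have hxp : 0 < ‖x‖ := norm_pos_iff.2 hx
          nlinarith
      refine ⟨G, ⟨hGnorm, by rw [hGapp, hgx]⟩, ?_⟩
      have hvmem : v ∈ (LinearPMap.mkSpanSingleton (K := ℝ) (L := ℝ) (σ := RingHom.id ℝ) v r hv).domain := by
        rw [LinearPMap.domain_mkSpanSingleton]
        exact Submodule.mem_span_singleton_self v
      have := hg1 ⟨v, hvmem⟩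
      rw [LinearPMap.mkSpanSingleton_apply] at this
      rw [hGapp]
      exact this
  have hr1 : ∀ c : ℝ, c * p v ≤ p (c • v) := by
    intro c
    rcases lt_trichotomy c 0 with hc | rfl | hc
    · rw [show c • v = (-c) • (-v) by module, hphom (-c) (by linarith) (-v)]
      have hsub : (0:ℝ) ≤ p v + p (-v) := by
        have := hpadd v (-v)
        simpa [hp0] using this
      nlinarith
    · simp [hp0]
    · rw [hphom c hc v]
  have hr2 : ∀ c : ℝ, c * (-(p (-v))) ≤ p (c • v) := by
    intro c
    rcases lt_trichotomy c 0 with hc | rfl | hc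
    · rw [show c • v = (-c) • (-v) by module, hphom (-c) (by linarith) (-v)]
      nlinarith
    · simp [hp0]
    · rw [hphom c hc v]
      have hsub : (0:ℝ) ≤ p v + p (-v) := by
        have := hpadd v (-v)
        simpa [hp0] using this
      nlinarith
  obtain ⟨G1, hG1, hG1v⟩ := hHB (p v) hr1
  obtain ⟨G2, hG2, hG2v⟩ := hHB (-(p (-v))) hr2
  obtain ⟨g0, _, hguniq⟩ := hsm x hx
  have hGeq : G1 = G2 := (hguniq G1 hG1).trans (hguniq G2 hG2).symm
  have hkey : p v = -(p (-v)) := by rw [← hG1v, hGeq, hG2v]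
  refine ⟨p v, ?_⟩
  rw [← nhdsLT_sup_nhdsGT (0:ℝ)]
  rw [Filter.tendsto_sup]
  constructor
  · -- left limit via the right limit of -v
    have hright : Filter.Tendsto (fun t : ℝ => (‖x + t • (-v)‖ - ‖x‖) / t) (𝓝[>] (0:ℝ))
        (𝓝 (p (-v))) := by
      have hmono : MonotoneOn (fun t : ℝ => (‖x + t • (-v)‖ - ‖x‖) / t) (Set.Ioi 0) :=
        fun a ha b hb hab =>
          slope_mono x (-v) (ne_of_gt (Set.mem_Ioi.1 ha)) (ne_of_gt (Set.mem_Ioi.1 hb)) hab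
      exact hmono.tendsto_nhdsGT (hbdd (-v))
    have hcomp := (hright.comp neg_tendsto_left_right).neg
    rw [show -(p (-v)) = p v from hkey.symm] at hcomp
    refine hcomp.congr ?_
    intro t
    show -((‖x + (-t) • (-v)‖ - ‖x‖) / (-t)) = (‖x + t • v‖ - ‖x‖) / t
    rw [show (-t) • (-v) = t • v by module]
    rw [div_neg, neg_neg]
  · have hmono : MonotoneOn (fun t : ℝ => (‖x + t • v‖ - ‖x‖) / t) (Set.Ioi 0) :=
      fun a ha b hb hab =>
        slope_mono x v (ne_of_gt (Set.mem_Ioi.1 ha)) (ne_of_gt (Set.mem_Ioi.1 hb)) hab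
    exact hmono.tendsto_nhdsGT (hbdd v)

theorem stmt_13 [FiniteDimensional ℝ X] (hdim : Module.finrank ℝ X = 2)
    (hsm : SmoothNormedSpace X) :
    (∀ u v : X, BirkhoffOrth u v → BirkhoffOrth v u) ↔
    (∀ x y : X, x ≠ 0 → y ≠ 0 → ∀ L M : ℝ,
      Filter.Tendsto (fun t : ℝ => (‖x + t • y‖ - ‖x‖) / t) (𝓝[≠] (0 : ℝ)) (𝓝 L) →
      Filter.Tendsto (fun t : ℝ => (‖y + t • x‖ - ‖y‖) / t) (𝓝[≠] (0 : ℝ)) (𝓝 M) →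
      Real.sign L = Real.sign M) := by
  constructor
  · intro hR x y hx hy L M hL hM
    obtain ⟨f, hf1, hfx⟩ := exists_dual_vector ℝ x (norm_ne_zero_iff.2 hx)
    have hfx' : f x = ‖x‖ := by exact_mod_cast hfx
    -- a nonzero kernel vector
    have hker : ∃ z : X, z ≠ 0 ∧ f z = 0 := by
      by_contra h
      push_neg at h
      have hinj : Function.Injective f := by
        intro a b hab
        by_contra hne
        exact h (a - b) (sub_ne_zero.2 hne) (by rw [map_sub, hab, sub_self])
      have hle := LinearMap.finrank_le_finrank_of_injective
        (f := (f : X →ₗ[ℝ] ℝ)) hinj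
      rw [hdim, Module.finrank_self] at hle
      omega
    obtain ⟨z, hz0, hfz⟩ := hker
    -- decompose y over the basis {x, z}
    have hspan : ∃ α β : ℝ, α • x + β • z = y := by
      have hli : LinearIndependent ℝ ![x, z] := by
        rw [LinearIndependent.pair_iff]
        intro s t hst
        have h1 : f (s • x + t • z) = 0 := by rw [hst, map_zero]
        rw [map_add, map_smul, map_smul, hfx', hfz] at h1
        simp only [smul_eq_mul, mul_zero, add_zero] at h1
        have hs : s = 0 := by
          rcases mul_eq_zero.1 h1 with h | h
          · exact h
          · exact absurd h (norm_ne_zero_iff.2 hx)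
        refine ⟨hs, ?_⟩
        rw [hs, zero_smul, zero_add] at hst
        rcases smul_eq_zero.1 hst with h | h
        · exact h
        · exact absurd h hz0
      have hcard : Fintype.card (Fin 2) = Module.finrank ℝ X := by
        simp [hdim]
      let b := basisOfLinearIndependentOfCardEqFinrank hli hcard
      have hb : ⇑b = ![x, z] := coe_basisOfLinearIndependentOfCardEqFinrank hli hcard
      refine ⟨b.repr y 0, b.repr y 1, ?_⟩
      have hsum := b.sum_repr y
      rw [Fin.sum_univ_two, hb] at hsum
      simpa using hsum
    obtain ⟨α, β, hyeq⟩ := hspan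
    rcases lt_trichotomy α 0 with hα | hα | hα
    · -- negative case: apply key_pos to -x
      have hL' : Filter.Tendsto (fun t : ℝ => (‖(-x) + t • y‖ - ‖(-x)‖) / t)
          (𝓝[≠] (0 : ℝ)) (𝓝 (-L)) := by
        refine ((hL.comp neg_tendsto_punctured).neg).congr ?_
        intro t
        show -((‖x + (-t) • y‖ - ‖x‖) / (-t)) = (‖(-x) + t • y‖ - ‖(-x)‖) / t
        rw [show (-x) + t • y = -(x + (-t) • y) by module, norm_neg, norm_neg,
          div_neg, neg_neg]
      have hM' : Filter.Tendsto (fun t : ℝ => (‖y + t • (-x)‖ - ‖y‖) / t)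
          (𝓝[≠] (0 : ℝ)) (𝓝 (-M)) := by
        refine ((hM.comp neg_tendsto_punctured).neg).congr ?_
        intro t
        show -((‖y + (-t) • x‖ - ‖y‖) / (-t)) = (‖y + t • (-x)‖ - ‖y‖) / t
        rw [show y + t • (-x) = y + (-t) • x by module, div_neg, neg_neg]
      have hkey := key_pos hR (-x) z y (-f) (neg_ne_zero.2 hx)
        (by rw [norm_neg, hf1])
        (by rw [ContinuousLinearMap.neg_apply, map_neg, hfx', neg_neg, norm_neg])
        (by rw [ContinuousLinearMap.neg_apply, hfz, neg_zero])
        (show y = (-α) • (-x) + β • z by rw [← hyeq]; module)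
        (by linarith) hL' hM'
      rw [Real.sign_of_neg (by linarith : L < 0), Real.sign_of_neg (by linarith : M < 0)]
    · -- zero case
      have hkey := key_zero hR x z y f hf1 hfx' hfz
        (show y = β • z by rw [← hyeq, hα]; module) hL hM
      rw [hkey.1, hkey.2]
    · -- positive case
      have hkey := key_pos hR x z y f hx hf1 hfx' hfz
        (show y = α • x + β • z from hyeq.symm) hα hL hM
      rw [Real.sign_of_pos hkey.1, Real.sign_of_pos hkey.2]
  · intro hsym u v huv
    rcases eq_or_ne u 0 with rfl | hu
    · intro t; simp
    rcases eq_or_ne v 0 with rfl | hv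
    · intro t; simpa using norm_nonneg (t • u)
    obtain ⟨L, hL⟩ := smooth_exists_lim hsm u hu v hv
    obtain ⟨M, hM⟩ := smooth_exists_lim hsm v hv u hu
    have hL0 : L = 0 := by
      have h1 : 0 ≤ L := lim_nonneg u v hL fun t ht =>
        div_nonneg (sub_nonneg.2 (huv t)) ht.le
      have h2 : L ≤ 0 := lim_nonpos u v hL fun t ht =>
        div_nonpos_of_nonneg_of_nonpos (sub_nonneg.2 (huv t)) ht.le
      linarith
    have hsgn := hsym u v hu hv L M hL hM
    rw [hL0, Real.sign_zero] at hsgn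
    have hM0 : M = 0 := Real.sign_eq_zero_iff.1 hsgn.symm
    intro t
    rcases lt_trichotomy t 0 with ht | rfl | ht
    · have h := le_lim v u hM ht
      rw [hM0] at h
      have h2 : 0 ≤ (‖v + t • u‖ - ‖v‖) / t * t := by
        have := mul_nonneg (neg_nonneg.2 h) (neg_nonneg.2 ht.le)
        simpa [neg_mul_neg] using this
      rw [div_mul_cancel₀ _ (ne_of_lt ht)] at h2
      linarith
    · simp
    · have h := lim_le v u hM ht
      rw [hM0] at h
      have h2 : 0 ≤ (‖v + t • u‖ - ‖v‖) / t * t := mul_nonneg h ht.le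
      rw [div_mul_cancel₀ _ (ne_of_gt ht)] at h2
      linarith
end

section
/- Let X be a smooth Minkowski plane and let z, w ∈ X form a conjugate pair, i.e. z and w are nonzero, linearly independent, z ⊣_B w and w ⊣_B z. Then for every nonzero x ∈ X, cm(x,z)·cm(z,x) + cm(x,w)·cm(w,x) = 1; equivalently, f_x(z)·f_z(x)/(‖z‖·‖x‖) + f_x(w)·f_w(x)/(‖w‖·‖x‖) = 1. (In a Radon plane this is the Pythagorean identity cn(x,z)² + cn(x,b(z))² = 1 for the symmetric cosine cn(x,y) := √(cm(x,y)·cm(y,x)).) -/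
variable {X : Type*} [NormedAddCommGroup X] [NormedSpace ℝ X]

lemma aux_norming_vanish [FiniteDimensional ℝ X]
    (hsm : SmoothNormedSpace X)
    (F : X → X →L[ℝ] ℝ) (hF : ∀ x : X, x ≠ 0 → IsNormingFunctional x (F x))
    {u v : X} (hu : u ≠ 0) (huv : BirkhoffOrth u v)
    (B : Module.Basis (Fin 2) ℝ X) (h0 : B 0 = u) (h1 : B 1 = v) :
    F u v = 0 := by
  have hun : (0:ℝ) < ‖u‖ := norm_pos_iff.mpr hu
  set g₀ : X →ₗ[ℝ] ℝ := ‖u‖ • (B.coord 0) with hg₀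
  have hrep : ∀ y : X, y = B.repr y 0 • u + B.repr y 1 • v := by
    intro y
    conv_lhs => rw [← B.sum_repr y]
    rw [Fin.sum_univ_two, h0, h1]
  have key : ∀ y : X, |g₀ y| ≤ ‖y‖ := by
    intro y
    have hg₀y : g₀ y = ‖u‖ * B.repr y 0 := by simp [hg₀, Module.Basis.coord_apply]
    by_cases ha : B.repr y 0 = 0
    · simp [hg₀y, ha]
    · set a := B.repr y 0
      set b := B.repr y 1
      have hy : y = a • u + b • v := hrep y
      have h1 : a • u + b • v = a • (u + (a⁻¹ * b) • v) := by
        rw [smul_add, smul_smul, mul_inv_cancel_left₀ ha]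
      have h2 : ‖y‖ = |a| * ‖u + (a⁻¹ * b) • v‖ := by
        rw [hy, h1, norm_smul, Real.norm_eq_abs]
      have h3 : ‖u‖ ≤ ‖u + (a⁻¹ * b) • v‖ := huv _
      have : |a| * ‖u‖ ≤ |a| * ‖u + (a⁻¹ * b) • v‖ :=
        mul_le_mul_of_nonneg_left h3 (abs_nonneg a)
      calc |g₀ y| = ‖u‖ * |a| := by rw [hg₀y, abs_mul, abs_of_pos hun]
        _ = |a| * ‖u‖ := mul_comm _ _
        _ ≤ ‖y‖ := by rw [h2]; exact this
  set g : X →L[ℝ] ℝ := LinearMap.toContinuousLinearMap g₀ with hg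
  have hgapp : ∀ y, g y = g₀ y := fun y => rfl
  have hgu : g u = ‖u‖ := by
    rw [hgapp]
    simp [hg₀, Module.Basis.coord_apply, ← h0]
  have hgv : g v = 0 := by
    rw [hgapp]
    have : B.repr v 0 = 0 := by rw [← h1]; simp
    simp [hg₀, Module.Basis.coord_apply, this]
  have hgle : ‖g‖ ≤ 1 := by
    apply ContinuousLinearMap.opNorm_le_bound _ zero_le_one
    intro y
    rw [one_mul, hgapp, Real.norm_eq_abs]
    exact key y
  have hgnorm : ‖g‖ = 1 := by
    refine le_antisymm hgle ?_
    have := g.le_opNorm u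
    rw [hgu, Real.norm_eq_abs, abs_of_pos hun] at this
    refine le_of_mul_le_mul_right ?_ hun
    rw [one_mul]; exact this
  obtain ⟨f, hf, huniq⟩ := hsm u hu
  have e1 : F u = f := huniq _ (hF u hu)
  have e2 : g = f := huniq _ ⟨hgnorm, hgu⟩
  rw [e1, ← e2, hgv]

theorem stmt_14 [FiniteDimensional ℝ X] (hdim : Module.finrank ℝ X = 2)
    (hsm : SmoothNormedSpace X)
    (F : X → X →L[ℝ] ℝ) (hF : ∀ x : X, x ≠ 0 → IsNormingFunctional x (F x))
    (z w : X) (hz : z ≠ 0) (hw : w ≠ 0) (hind : LinearIndependent ℝ ![z, w])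
    (hzw : BirkhoffOrth z w) (hwz : BirkhoffOrth w z)
    (x : X) (hx : x ≠ 0) :
    (F x z / ‖z‖) * (F z x / ‖x‖) + (F x w / ‖w‖) * (F w x / ‖x‖) = 1 := by
  have hcard : Fintype.card (Fin 2) = Module.finrank ℝ X := by simp [hdim]
  set B := basisOfLinearIndependentOfCardEqFinrank hind hcard with hB
  have hB0 : B 0 = z := by
    rw [hB, coe_basisOfLinearIndependentOfCardEqFinrank]; rfl
  have hB1 : B 1 = w := by
    rw [hB, coe_basisOfLinearIndependentOfCardEqFinrank]; rfl
  set B' := B.reindex (Equiv.swap 0 1) with hB'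
  have hB'0 : B' 0 = w := by rw [hB', Module.Basis.reindex_apply]; simpa using hB1
  have hB'1 : B' 1 = z := by rw [hB', Module.Basis.reindex_apply]; simpa using hB0
  have hFzw : F z w = 0 := aux_norming_vanish hsm F hF hz hzw B hB0 hB1
  have hFwz : F w z = 0 := aux_norming_vanish hsm F hF hw hwz B' hB'0 hB'1
  set a := B.repr x 0
  set b := B.repr x 1
  have hxab : x = a • z + b • w := by
    conv_lhs => rw [← B.sum_repr x]
    rw [Fin.sum_univ_two, hB0, hB1]
  have hFzz : F z z = ‖z‖ := (hF z hz).2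
  have hFww : F w w = ‖w‖ := (hF w hw).2
  have hFxx : F x x = ‖x‖ := (hF x hx).2
  have hFzx : F z x = a * ‖z‖ := by
    rw [hxab]; simp [hFzz, hFzw]
  have hFwx : F w x = b * ‖w‖ := by
    rw [hxab]; simp [hFww, hFwz]
  have hFx : F x z * a + F x w * b = ‖x‖ := by
    have : F x x = a * F x z + b * F x w := by
      rw [hxab]; simp
    rw [hFxx] at this; linarith
  have hzn : ‖z‖ ≠ 0 := norm_ne_zero_iff.mpr hz
  have hwn : ‖w‖ ≠ 0 := norm_ne_zero_iff.mpr hw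
  have hxn : ‖x‖ ≠ 0 := norm_ne_zero_iff.mpr hx
  rw [hFzx, hFwx]
  field_simp
  linear_combination hFx
end

section
/- Let X be a smooth Minkowski plane with a fixed nondegenerate alternating bilinear form [·,·], and let γ : ℝ → X be a differentiable curve with ‖γ(a)‖ = 1 and [γ(a), γ'(a)] = 1 for all a (an area parameterization of the unit circle). Then ‖γ'(a)‖_a = 1 for all a; that is, the area parameterization of the unit circle is a parameterization by arc length in the antinorm. -/
variable {X : Type*} [NormedAddCommGroup X] [NormedSpace ℝ X]

theorem stmt_15 [FiniteDimensional ℝ X] (hdim : Module.finrank ℝ X = 2)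
    (hsm : SmoothNormedSpace X)
    (ω : X →ₗ[ℝ] X →ₗ[ℝ] ℝ) (hω : IsSymplecticForm ω)
    (γ γ' : ℝ → X) (hderiv : ∀ a : ℝ, HasDerivAt γ (γ' a) a)
    (hunit : ∀ a : ℝ, ‖γ a‖ = 1) (harea : ∀ a : ℝ, ω (γ a) (γ' a) = 1) :
    ∀ a : ℝ, antinorm ω (γ' a) = 1 := by
  intro a
  set x := γ a with hx
  set v := γ' a with hv
  have hxn : ‖x‖ = 1 := hunit a
  have hxne : x ≠ 0 := by
    intro h; rw [h, norm_zero] at hxn; exact one_ne_zero hxn.symm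
  obtain ⟨f, hf1, hfx⟩ := exists_dual_vector ℝ x (norm_ne_zero_iff.mpr hxne)
  rw [hxn] at hfx
  -- f v = 0
  have hg : HasDerivAt (fun t => f (γ t)) (f v) a :=
    f.hasFDerivAt.comp_hasDerivAt a (hderiv a)
  have hmax : IsLocalMax (fun t => f (γ t)) a := by
    apply Filter.Eventually.of_forall
    intro t
    calc f (γ t) ≤ |f (γ t)| := le_abs_self _
      _ ≤ ‖f‖ * ‖γ t‖ := f.le_opNorm _
      _ = 1 := by rw [hf1, hunit t, one_mul]
      _ = f (γ a) := hfx.symm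
  have hfv : f v = 0 := hmax.hasDerivAt_eq_zero hg
  -- ω v x = -1
  have hωxv : ω x v = 1 := harea a
  have hωvx : ω v x = -1 := by
    have h0 := hω.1 (x + v)
    simp only [map_add, LinearMap.add_apply, hω.1 x, hω.1 v, hωxv] at h0
    linarith
  -- linear independence of ![x, v]
  have hli : LinearIndependent ℝ ![x, v] := by
    rw [LinearIndependent.pair_iff]
    intro s t hst
    have h1 : ω x (s • x + t • v) = 0 := by rw [hst, map_zero]
    have h2 : ω v (s • x + t • v) = 0 := by rw [hst, map_zero]
    simp only [map_add, map_smul, smul_eq_mul, hω.1 x, hω.1 v, hωxv, hωvx] at h1 h2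
    constructor <;> linarith
  have hcard : Fintype.card (Fin 2) = Module.finrank ℝ X := by simp [hdim]
  let b := basisOfLinearIndependentOfCardEqFinrank hli hcard
  have hb : ⇑b = ![x, v] := coe_basisOfLinearIndependentOfCardEqFinrank hli hcard
  -- ω v = -f as linear map
  have key : (ω v) = -(f : X →ₗ[ℝ] ℝ) := by
    apply b.ext
    intro i
    fin_cases i <;>
      simp [hb, hωvx, hω.1 v, hfv, hfx]
  have habs : ∀ u : X, |ω v u| = |f u| := by
    intro u
    rw [key]
    simp [abs_neg]
  -- compute the sSup
  have hmem : (1 : ℝ) ∈ {r : ℝ | ∃ u : X, ‖u‖ = 1 ∧ r = |ω v u|} :=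
    ⟨x, hxn, by rw [hωvx]; norm_num⟩
  have hub : ∀ r ∈ {r : ℝ | ∃ u : X, ‖u‖ = 1 ∧ r = |ω v u|}, r ≤ 1 := by
    rintro r ⟨u, hu, rfl⟩
    rw [habs u]
    calc |f u| ≤ ‖f‖ * ‖u‖ := f.le_opNorm u
      _ = 1 := by rw [hf1, hu, one_mul]
  exact le_antisymm (csSup_le ⟨1, hmem⟩ hub) (le_csSup ⟨1, hub⟩ hmem)
end

section
/- Let X be a smooth Minkowski plane with a fixed nondegenerate alternating bilinear form [·,·], and let γ : ℝ → X be a differentiable curve with ‖γ(s)‖ = 1 and ‖γ'(s)‖ = 1 for all s and [γ(s), γ'(s)] > 0 (a positively oriented arc length parameterization of the unit circle). Fix s₀ and let w ∈ X satisfy ‖w‖_a = 1, γ(s₀) ⊣_B w and [γ(s₀), w] > 0 (that is, w = b(γ(s₀))). Then γ'(s₀) = w/‖w‖. -/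
variable {X : Type*} [NormedAddCommGroup X] [NormedSpace ℝ X]

theorem stmt_16 [FiniteDimensional ℝ X] (hdim : Module.finrank ℝ X = 2)
    (hsm : SmoothNormedSpace X)
    (ω : X →ₗ[ℝ] X →ₗ[ℝ] ℝ) (hω : IsSymplecticForm ω)
    (γ γ' : ℝ → X) (hderiv : ∀ s : ℝ, HasDerivAt γ (γ' s) s)
    (hunit : ∀ s : ℝ, ‖γ s‖ = 1) (hspeed : ∀ s : ℝ, ‖γ' s‖ = 1)
    (horient : ∀ s : ℝ, 0 < ω (γ s) (γ' s))
    (s₀ : ℝ) (w : X) (hw_a : antinorm ω w = 1)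
    (hw_orth : BirkhoffOrth (γ s₀) w) (hw_pos : 0 < ω (γ s₀) w) :
    γ' s₀ = ‖w‖⁻¹ • w := by
  set x := γ s₀ with hxdef
  set v := γ' s₀ with hvdef
  have hx1 : ‖x‖ = 1 := hunit s₀
  have hx0 : x ≠ 0 := by intro h; rw [h] at hx1; simp at hx1
  have hw0 : w ≠ 0 := by intro h; rw [h] at hw_pos; simp at hw_pos
  have hind : LinearIndependent ℝ ![x, w] := by
    rw [LinearIndependent.pair_iff]
    intro s t hst
    have h1 : ω x (s • x + t • w) = 0 := by rw [hst]; simp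
    have h2 : t * ω x w = 0 := by
      simpa [hω.1 x, map_add, map_smul, smul_eq_mul] using h1
    have ht : t = 0 := by
      rcases mul_eq_zero.1 h2 with h | h
      · exact h
      · exact absurd h (ne_of_gt hw_pos)
    subst ht
    simp only [zero_smul, add_zero, smul_eq_zero] at hst
    rcases hst with h | h
    · exact ⟨h, rfl⟩
    · exact absurd h hx0
  have hcard : Fintype.card (Fin 2) = Module.finrank ℝ X := by simp [hdim]
  let B := basisOfLinearIndependentOfCardEqFinrank hind hcard
  have hB0 : B 0 = x := by
    simp [B, coe_basisOfLinearIndependentOfCardEqFinrank]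
  have hB1 : B 1 = w := by
    simp [B, coe_basisOfLinearIndependentOfCardEqFinrank]
  have hrep : ∀ z : X, z = B.repr z 0 • x + B.repr z 1 • w := by
    intro z
    have h := B.sum_repr z
    rw [Fin.sum_univ_two, hB0, hB1] at h
    exact h.symm
  have hbound : ∀ z : X, |B.coord 0 z| ≤ ‖z‖ := by
    intro z
    have hz : z = B.repr z 0 • x + B.repr z 1 • w := hrep z
    set a := B.repr z 0 with ha'
    set b := B.repr z 1 with hb'
    have hcoord : B.coord 0 z = a := by simp [Module.Basis.coord_apply, ha']
    rw [hcoord]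
    by_cases ha : a = 0
    · simp [ha]
    · have key : ‖x‖ ≤ ‖x + (b / a) • w‖ := hw_orth (b / a)
      have hzn : ‖z‖ = |a| * ‖x + (b / a) • w‖ := by
        have : a • (x + (b / a) • w) = a • x + b • w := by
          rw [smul_add, smul_smul, mul_div_cancel₀ _ ha]
        rw [hz, ← this, norm_smul, Real.norm_eq_abs]
      calc |a| = |a| * ‖x‖ := by rw [hx1, mul_one]
        _ ≤ |a| * ‖x + (b / a) • w‖ :=
            mul_le_mul_of_nonneg_left key (abs_nonneg a)
        _ = ‖z‖ := hzn.symm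
  let F : X →L[ℝ] ℝ := LinearMap.mkContinuous (B.coord 0) 1
    (fun z => by simpa using hbound z)
  have hFx : F x = 1 := by
    show B.coord 0 x = 1
    rw [← hB0]
    simp [Module.Basis.coord_apply]
  have hFle : ∀ s : ℝ, F (γ s) ≤ 1 := by
    intro s
    have : |F (γ s)| ≤ ‖γ s‖ := hbound (γ s)
    rw [hunit s] at this
    exact (le_abs_self _).trans this
  have hmax : IsLocalMax (fun s => F (γ s)) s₀ :=
    Filter.Eventually.of_forall (fun s => by
      show F (γ s) ≤ F (γ s₀)
      rw [← hxdef, hFx]; exact hFle s)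
  have hD : HasDerivAt (fun s => F (γ s)) (F v) s₀ :=
    F.hasFDerivAt.comp_hasDerivAt s₀ (hderiv s₀)
  have hFv : F v = 0 := hmax.hasDerivAt_eq_zero hD
  have hv0 : B.repr v 0 = 0 := by
    have : B.coord 0 v = 0 := hFv
    simpa [Module.Basis.coord_apply] using this
  set c := B.repr v 1 with hc'
  have hvc : v = c • w := by
    have h := hrep v
    rw [hv0, zero_smul, zero_add] at h
    exact h
  have hωv : 0 < c * ω x w := by
    have h := horient s₀
    rw [← hxdef, ← hvdef, hvc] at h
    simpa [map_smul, smul_eq_mul] using h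
  have hcpos : 0 < c := by
    by_contra hcn
    push_neg at hcn
    nlinarith
  have hcnorm : c * ‖w‖ = 1 := by
    have h := hspeed s₀
    rw [← hvdef, hvc, norm_smul, Real.norm_eq_abs, abs_of_pos hcpos] at h
    exact h
  have : c = ‖w‖⁻¹ := eq_inv_of_mul_eq_one_left (by rw [mul_comm] at hcnorm ⊢; exact hcnorm)
  rw [hvc, this]
end

section
/- Let X be a smooth finite-dimensional real normed space and define s : X × X → ℝ by s(x,y) := ‖x‖·f_x(y) for x ≠ 0, and s(x,y) := 0 if x = 0. Then s is the unique norm-generating semi-inner product on X; that is: (a) y ↦ s(z,y) is linear for every z ∈ X; (b) s(α·x, y) = α·s(x,y) for all α ∈ ℝ and x, y ∈ X; (c) s(x,x) = ‖x‖² for all x (in particular s(x,x) ≥ 0 with equality iff x = 0); (d) s(x,y)² ≤ s(x,x)·s(y,y) for all x, y; and moreover any function s' : X × X → ℝ satisfying (a), (b), (d), s'(x,x) ≥ 0 with equality iff x = 0, and s'(x,x) = ‖x‖² for all x, coincides with s. -/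
variable {X : Type*} [NormedAddCommGroup X] [NormedSpace ℝ X]

theorem stmt_17 [FiniteDimensional ℝ X] (hsm : SmoothNormedSpace X)
    (F : X → X →L[ℝ] ℝ) (hF : ∀ x : X, x ≠ 0 → IsNormingFunctional x (F x))
    -- the candidate semi-inner product `s x y = ‖x‖ ⬝ f_x y` for `x ≠ 0`, `s 0 y = 0`
    (S : X → X → ℝ)
    (hS0 : ∀ y : X, S 0 y = 0)
    (hS1 : ∀ x y : X, x ≠ 0 → S x y = ‖x‖ * F x y) :
    -- (a) linearity in the second variable
    (∀ (z u v : X) (a b : ℝ), S z (a • u + b • v) = a * S z u + b * S z v) ∧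
    -- (b) homogeneity in the first variable
    (∀ (a : ℝ) (x y : X), S (a • x) y = a * S x y) ∧
    -- (c) the quadratic form is the squared norm (so positive definite)
    (∀ x : X, S x x = ‖x‖ ^ 2) ∧
    (∀ x : X, 0 ≤ S x x) ∧ (∀ x : X, S x x = 0 ↔ x = 0) ∧
    -- (d) Cauchy–Schwarz
    (∀ x y : X, (S x y) ^ 2 ≤ S x x * S y y) ∧
    -- uniqueness among norm-generating semi-inner products
    (∀ S' : X → X → ℝ,
      (∀ (z u v : X) (a b : ℝ), S' z (a • u + b • v) = a * S' z u + b * S' z v) →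
      (∀ (a : ℝ) (x y : X), S' (a • x) y = a * S' x y) →
      (∀ x y : X, (S' x y) ^ 2 ≤ S' x x * S' y y) →
      (∀ x : X, 0 ≤ S' x x) → (∀ x : X, S' x x = 0 ↔ x = 0) →
      (∀ x : X, S' x x = ‖x‖ ^ 2) →
      S' = S) := by
  
  -- basic facts
  have key : ∀ x y : X, x ≠ 0 → |F x y| ≤ ‖y‖ := by
    intro x y hx
    calc |F x y| = ‖F x y‖ := rfl
      _ ≤ ‖F x‖ * ‖y‖ := (F x).le_opNorm y
      _ = ‖y‖ := by rw [(hF x hx).1, one_mul]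
  have hc : ∀ x : X, S x x = ‖x‖ ^ 2 := by
    intro x
    by_cases hx : x = 0
    · simp [hx, hS0]
    · rw [hS1 x x hx, (hF x hx).2]; ring
  refine ⟨?_, ?_, hc, ?_, ?_, ?_, ?_⟩
  · -- (a)
    intro z u v a b
    by_cases hz : z = 0
    · simp [hz, hS0]
    · simp only [hS1 _ _ hz, map_add, map_smul, smul_eq_mul]; ring
  · -- (b)
    intro a x y
    by_cases hx : x = 0
    · simp [hx, hS0]
    by_cases ha : a = 0
    · simp [ha, hS0]
    have hax : a • x ≠ 0 := smul_ne_zero ha hx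
    rcases lt_or_gt_of_ne ha with hneg | hpos
    · have hF' : IsNormingFunctional (a • x) (-(F x)) := by
        constructor
        · rw [norm_neg, (hF x hx).1]
        · simp only [ContinuousLinearMap.neg_apply, map_smul, smul_eq_mul,
            (hF x hx).2, norm_smul, Real.norm_eq_abs, abs_of_neg hneg]
          ring
      have heq := ((hsm (a • x) hax).unique (hF _ hax) hF')
      rw [hS1 _ _ hax, hS1 _ _ hx, heq]
      simp only [ContinuousLinearMap.neg_apply, norm_smul, Real.norm_eq_abs,
        abs_of_neg hneg]
      ring
    · have hF' : IsNormingFunctional (a • x) (F x) := by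
        constructor
        · exact (hF x hx).1
        · simp only [map_smul, smul_eq_mul, (hF x hx).2, norm_smul,
            Real.norm_eq_abs, abs_of_pos hpos]
      have heq := ((hsm (a • x) hax).unique (hF _ hax) hF')
      rw [hS1 _ _ hax, hS1 _ _ hx, heq]
      simp only [norm_smul, Real.norm_eq_abs, abs_of_pos hpos]
      ring
  · intro x; rw [hc x]; positivity
  · intro x
    rw [hc x]
    constructor
    · intro h
      have : ‖x‖ = 0 := by nlinarith [norm_nonneg x]
      exact norm_eq_zero.mp this
    · intro h; simp [h]
  · -- (d)
    intro x y
    by_cases hx : x = 0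
    · simp [hx, hS0]
    · rw [hc x, hc y, hS1 x y hx]
      have h5 : (F x y) ^ 2 ≤ ‖y‖ ^ 2 := by
        nlinarith [sq_abs (F x y), abs_nonneg (F x y), key x y hx]
      rw [mul_pow]
      exact mul_le_mul_of_nonneg_left h5 (sq_nonneg ‖x‖)
  · -- uniqueness
    intro S' ha' hb' hcs' hpos' hzero' hnorm'
    funext x y
    by_cases hx : x = 0
    · have h0 : S' (0 : X) y = 0 := by
        have h := hb' 0 x y
        simpa [hx] using h
      rw [hx, h0, hS0]
    · have hlin_add : ∀ u v : X, S' x (u + v) = S' x u + S' x v := by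
        intro u v
        have h := ha' x u v 1 1; simpa using h
      have hlin_smul : ∀ (a : ℝ) (u : X), S' x (a • u) = a * S' x u := by
        intro a u
        have h := ha' x u 0 a 0; simpa using h
      have hbound : ∀ w : X, |S' x w| ≤ ‖x‖ * ‖w‖ := by
        intro w
        have h2 := hcs' x w
        rw [hnorm' x, hnorm' w] at h2
        have h3 : (S' x w) ^ 2 ≤ (‖x‖ * ‖w‖) ^ 2 := by nlinarith
        have h4 : (0:ℝ) ≤ ‖x‖ * ‖w‖ := by positivity
        exact abs_le.mpr (abs_le_of_sq_le_sq' h3 h4)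
      set g : X →ₗ[ℝ] ℝ :=
        { toFun := fun w => S' x w
          map_add' := hlin_add
          map_smul' := by intro a u; simp [smul_eq_mul, hlin_smul] } with hg
      have hcont := g.continuous_of_finiteDimensional
      set G : X →L[ℝ] ℝ := ⟨g, hcont⟩ with hG
      have hGapp : ∀ w : X, G w = S' x w := fun w => rfl
      set f : X →L[ℝ] ℝ := ‖x‖⁻¹ • G with hf
      have hxpos : (0:ℝ) < ‖x‖ := norm_pos_iff.mpr hx
      have hfapp : ∀ w : X, f w = ‖x‖⁻¹ * S' x w := fun w => rfl
      have hfx : f x = ‖x‖ := by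
        rw [hfapp, hnorm' x]
        field_simp
      have hfle : ‖f‖ ≤ 1 := by
        apply ContinuousLinearMap.opNorm_le_bound _ zero_le_one
        intro w
        rw [hfapp, one_mul]
        have := hbound w
        rw [Real.norm_eq_abs, abs_mul, abs_inv, abs_of_pos hxpos]
        calc ‖x‖⁻¹ * |S' x w| ≤ ‖x‖⁻¹ * (‖x‖ * ‖w‖) := by
              apply mul_le_mul_of_nonneg_left this (by positivity)
          _ = ‖w‖ := by field_simp
      have hfge : 1 ≤ ‖f‖ := by
        have h := f.le_opNorm x
        rw [hfx, Real.norm_eq_abs, abs_of_pos hxpos] at h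
        nlinarith
      have hfnorm : IsNormingFunctional x f := ⟨le_antisymm hfle hfge, hfx⟩
      have heq : f = F x := (hsm x hx).unique hfnorm (hF x hx)
      have : S' x y = ‖x‖ * F x y := by
        have h := congrArg (fun φ : X →L[ℝ] ℝ => φ y) heq
        rw [hfapp] at h
        field_simp at h
        linarith [h]
      rw [this, hS1 x y hx]
end
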